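/- arXiv:1502.06291 — 5 statements merged into one kernel-verified Lean document; each statement's English description precedes it below -/
import Mathlib

section
/- Let η₁,…,ηₙ be i.i.d. random variables with P(ηᵢ = 1) = P(ηᵢ = −1) = 1/2. For β ∈ ℝ^p define φ(β) := Σ_{i=1}^n ηᵢ (x_iβ* − x_iβ)². If |β*|₁ ≤ L, then E( sup_{β ∈ ℝ^p : |β|₁ ≤ L} φ(β) ) ≤ 3L² (2Mn log(2p²))^{1/2}. -/
open MeasureTheory ProbabilityTheory Real



section aux
variable {Ω : Type*} [MeasureSpace Ω] [IsProbabilityMeasure (ℙ : Measure Ω)]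

lemma rad_compl_null (e : Ω → ℝ) (hm : Measurable e) (h1 : ℙ {ω | e ω = 1} = 1 / 2)
    (h2 : ℙ {ω | e ω = -1} = 1 / 2) :
    ℙ ({ω | e ω = 1} ∪ {ω | e ω = -1})ᶜ = 0 := by
  have hA : MeasurableSet {ω | e ω = 1} := hm (measurableSet_singleton 1)
  have hB : MeasurableSet {ω | e ω = -1} := hm (measurableSet_singleton (-1))
  have hd : Disjoint {ω | e ω = 1} {ω | e ω = -1} := by
    rw [Set.disjoint_left]
    rintro ω (h : e ω = 1) (h' : e ω = -1)
    norm_num [h] at h'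
  have hu : ℙ ({ω | e ω = 1} ∪ {ω | e ω = -1}) = 1 := by
    rw [measure_union hd hB, h1, h2]
    rw [ENNReal.div_add_div_same, one_add_one_eq_two]
    exact ENNReal.div_self two_ne_zero ENNReal.ofNat_ne_top
  rw [measure_compl (hA.union hB) (by simp), hu, measure_univ, tsub_self]

lemma rad_ae (e : Ω → ℝ) (hm : Measurable e) (h1 : ℙ {ω | e ω = 1} = 1 / 2)
    (h2 : ℙ {ω | e ω = -1} = 1 / 2) : ∀ᵐ ω ∂ℙ, e ω = 1 ∨ e ω = -1 := by
  have := rad_compl_null e hm h1 h2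
  filter_upwards [measure_eq_zero_iff_ae_notMem.mp this] with ω hω
  simpa [Set.mem_union, not_or, Set.mem_setOf_eq, or_iff_not_imp_left] using
    fun h => by_contra fun h' => hω (by simp [Set.mem_union, Set.mem_setOf_eq]; tauto)

lemma rad_int (e : Ω → ℝ) (hm : Measurable e) (h1 : ℙ {ω | e ω = 1} = 1 / 2)
    (h2 : ℙ {ω | e ω = -1} = 1 / 2) (h : ℝ → ℝ) :
    ∫ ω, h (e ω) ∂ℙ = (h 1 + h (-1)) / 2 := by
  have hA : MeasurableSet {ω | e ω = 1} := hm (measurableSet_singleton 1)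
  have hB : MeasurableSet {ω | e ω = -1} := hm (measurableSet_singleton (-1))
  have hae : (fun ω => h (e ω)) =ᵐ[ℙ]
      (fun ω => Set.indicator {ω | e ω = 1} (fun _ => h 1) ω
        + Set.indicator {ω | e ω = -1} (fun _ => h (-1)) ω) := by
    filter_upwards [rad_ae e hm h1 h2] with ω hω
    rcases hω with h' | h' <;>
      simp [Set.indicator_apply, Set.mem_setOf_eq, h'] <;> intro hc <;> norm_num at hc
  rw [integral_congr_ae hae, integral_add
      ((integrable_const _).indicator hA) ((integrable_const _).indicator hB),
    integral_indicator_const _ hA, integral_indicator_const _ hB, measureReal_def, measureReal_def, h1, h2]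
  simp [ENNReal.toReal_div]
  ring

end aux


section aux2
variable {Ω : Type*} [MeasureSpace Ω] [IsProbabilityMeasure (ℙ : Measure Ω)]


lemma rad_mgf (n : ℕ) (η : Fin n → Ω → ℝ) (hmeas : ∀ i, Measurable (η i))
    (hindep : iIndepFun η ℙ)
    (hdist : ∀ i, ℙ {ω | η i ω = 1} = 1 / 2 ∧ ℙ {ω | η i ω = -1} = 1 / 2)
    (a : Fin n → ℝ) (t : ℝ) :
    ∫ ω, Real.exp (t * ∑ i, a i * η i ω) ∂ℙ ≤ Real.exp (t ^ 2 * (∑ i, (a i) ^ 2) / 2) := by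
  set X : Fin n → Ω → ℝ := fun i ω => a i * η i ω with hX
  have hXm : ∀ i, Measurable (X i) := fun i => (hmeas i).const_mul (a i)
  have hXind : iIndepFun X ℙ :=
    hindep.comp (fun i u => a i * u) (fun i => measurable_const_mul _)
  have hsum : (fun ω => ∑ i, a i * η i ω) = ∑ i, X i := by
    ext ω; simp [hX, Finset.sum_apply]
  have h2 : ∀ i, mgf (X i) ℙ t = Real.cosh (t * a i) := by
    intro i
    have h := rad_int (η i) (hmeas i) (hdist i).1 (hdist i).2
      (fun u => Real.exp (t * (a i * u)))
    simp only [mgf]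
    rw [show (fun ω => Real.exp (t * X i ω)) = fun ω => Real.exp (t * (a i * η i ω)) from rfl]
    rw [h, Real.cosh_eq]
    ring_nf
  calc ∫ ω, Real.exp (t * ∑ i, a i * η i ω) ∂ℙ
      = mgf (∑ i, X i) ℙ t := by
        rw [mgf]; congr 1; funext ω; simp [hX, Finset.sum_apply]
    _ = ∏ i, mgf (X i) ℙ t := hXind.mgf_sum hXm Finset.univ
    _ = ∏ i, Real.cosh (t * a i) := Finset.prod_congr rfl fun i _ => h2 i
    _ ≤ ∏ i, Real.exp ((t * a i) ^ 2 / 2) :=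
        Finset.prod_le_prod (fun i _ => (Real.cosh_pos (t * a i)).le)
          (fun i _ => Real.cosh_le_exp_half_sq _)
    _ = Real.exp (∑ i, (t * a i) ^ 2 / 2) := by rw [Real.exp_sum]
    _ = Real.exp (t ^ 2 * (∑ i, (a i) ^ 2) / 2) := by
        congr 1
        rw [Finset.mul_sum, Finset.sum_div]
        exact Finset.sum_congr rfl fun i _ => by ring

lemma max_exp {ι : Type*} [Fintype ι] [Nonempty ι] (Z : ι → Ω → ℝ)
    (hZm : ∀ k, Measurable (Z k)) (C : ℝ) (hZb : ∀ k, ∀ᵐ ω ∂ℙ, |Z k ω| ≤ C)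
    (v : ℝ) (hv : 0 < v)
    (hmgf : ∀ k (t : ℝ), ∫ ω, Real.exp (t * Z k ω) ∂ℙ ≤ Real.exp (t ^ 2 * v / 2)) :
    ∫ ω, Finset.univ.sup' Finset.univ_nonempty (fun k => |Z k ω|) ∂ℙ
      ≤ Real.sqrt (2 * v * Real.log (2 * Fintype.card ι)) := by
  have hcard : 1 ≤ (Fintype.card ι : ℝ) := by exact_mod_cast Fintype.card_pos
  set N : ℝ := 2 * Fintype.card ι with hNdef
  have hN1 : 2 ≤ N := by nlinarith
  have hlogN : 0 < Real.log N := Real.log_pos (by linarith)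
  set s := Real.sqrt (2 * v * Real.log N) with hsdef
  have hs2 : s ^ 2 = 2 * v * Real.log N := Real.sq_sqrt (by positivity)
  have hs0 : 0 < s := Real.sqrt_pos.mpr (by positivity)
  set t := s / v with htdef
  have ht0 : 0 < t := div_pos hs0 hv
  set G : Ω → ℝ := fun ω => Finset.univ.sup' Finset.univ_nonempty (fun k => |Z k ω|) with hGdef
  have hGm : Measurable G := by
    have h := Finset.measurable_sup' (Finset.univ_nonempty (α := ι))
      (f := fun k => fun ω => |Z k ω|) (fun k _ => (hZm k).abs)
    have : G = Finset.univ.sup' Finset.univ_nonempty (fun k => fun ω => |Z k ω|) := by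
      funext ω; rw [Finset.sup'_apply]
    rwa [this]
  have hG0 : ∀ ω, 0 ≤ G ω := fun ω =>
    le_trans (abs_nonneg (Z (Classical.arbitrary ι) ω))
      (Finset.le_sup' (fun k => |Z k ω|) (Finset.mem_univ (Classical.arbitrary ι)))
  have hGb : ∀ᵐ ω ∂ℙ, G ω ≤ C := by
    filter_upwards [ae_all_iff.mpr hZb] with ω h
    exact Finset.sup'_le _ _ fun k _ => h k
  have hC0 : 0 ≤ C := by
    by_contra hc
    have := (hGb.and (ae_of_all _ hG0)).exists
    obtain ⟨ω, h1, h2⟩ := this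
    linarith
  have hGint : Integrable G ℙ := by
    refine ⟨hGm.aestronglyMeasurable, HasFiniteIntegral.of_bounded (C := C) ?_⟩
    filter_upwards [hGb] with ω h
    rw [Real.norm_eq_abs, abs_of_nonneg (hG0 ω)]; exact h
  have hkey : ∀ ω, Real.exp (t * G ω) ≤
      ∑ k : ι, (Real.exp (t * Z k ω) + Real.exp (-t * Z k ω)) := by
    intro ω
    obtain ⟨k₀, -, hk₀⟩ := Finset.exists_mem_eq_sup' (Finset.univ_nonempty (α := ι))
      (fun k => |Z k ω|)
    have h1 : Real.exp (t * G ω) ≤ Real.exp (t * Z k₀ ω) + Real.exp (-t * Z k₀ ω) := by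
      have hG : G ω = |Z k₀ ω| := hk₀
      rw [hG]
      rcases abs_cases (Z k₀ ω) with ⟨h, _⟩ | ⟨h, _⟩
      · rw [h]; exact le_add_of_nonneg_right (Real.exp_pos _).le
      · rw [h, show t * -Z k₀ ω = -t * Z k₀ ω by ring]
        exact le_add_of_nonneg_left (Real.exp_pos _).le
    exact h1.trans (Finset.single_le_sum (f := fun k => Real.exp (t * Z k ω) + Real.exp (-t * Z k ω))
      (fun k _ => by positivity) (Finset.mem_univ k₀))
  have hexpint : ∀ (u : ℝ) (k : ι), Integrable (fun ω => Real.exp (u * Z k ω)) ℙ := by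
    intro u k
    refine ⟨(((hZm k).const_mul u).exp).aestronglyMeasurable,
      HasFiniteIntegral.of_bounded (C := Real.exp (|u| * C)) ?_⟩
    filter_upwards [hZb k] with ω h
    rw [Real.norm_eq_abs, Real.abs_exp, Real.exp_le_exp]
    calc u * Z k ω ≤ |u * Z k ω| := le_abs_self _
      _ = |u| * |Z k ω| := abs_mul _ _
      _ ≤ |u| * C := mul_le_mul_of_nonneg_left h (abs_nonneg u)
  have hexpGint : Integrable (fun ω => Real.exp (t * G ω)) ℙ := by
    refine ⟨((hGm.const_mul t).exp).aestronglyMeasurable,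
      HasFiniteIntegral.of_bounded (C := Real.exp (t * C)) ?_⟩
    filter_upwards [hGb] with ω h
    rw [Real.norm_eq_abs, Real.abs_exp, Real.exp_le_exp]
    exact mul_le_mul_of_nonneg_left h ht0.le
  have hjensen : Real.exp (∫ ω, t * G ω ∂ℙ) ≤ ∫ ω, Real.exp (t * G ω) ∂ℙ :=
    convexOn_exp.map_integral_le continuous_exp.continuousOn isClosed_univ
      (Filter.Eventually.of_forall fun ω => Set.mem_univ _) (hGint.const_mul t) hexpGint
  have hsum_int : Integrable
      (fun ω => ∑ k : ι, (Real.exp (t * Z k ω) + Real.exp (-t * Z k ω))) ℙ :=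
    integrable_finset_sum _ (fun k _ => (hexpint t k).add (hexpint (-t) k))
  have h2 : ∫ ω, Real.exp (t * G ω) ∂ℙ ≤ N * Real.exp (t ^ 2 * v / 2) := by
    calc ∫ ω, Real.exp (t * G ω) ∂ℙ
        ≤ ∫ ω, ∑ k : ι, (Real.exp (t * Z k ω) + Real.exp (-t * Z k ω)) ∂ℙ :=
          integral_mono hexpGint hsum_int hkey
      _ = ∑ k : ι, ∫ ω, (Real.exp (t * Z k ω) + Real.exp (-t * Z k ω)) ∂ℙ :=
          integral_finset_sum _ (fun k _ => (hexpint t k).add (hexpint (-t) k))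
      _ = ∑ k : ι, ((∫ ω, Real.exp (t * Z k ω) ∂ℙ) + ∫ ω, Real.exp (-t * Z k ω) ∂ℙ) :=
          Finset.sum_congr rfl fun k _ => integral_add (hexpint t k) (hexpint (-t) k)
      _ ≤ ∑ k : ι, (Real.exp (t ^ 2 * v / 2) + Real.exp (t ^ 2 * v / 2)) := by
          refine Finset.sum_le_sum fun k _ => add_le_add (hmgf k t) ?_
          have := hmgf k (-t)
          rwa [show ((-t):ℝ) ^ 2 = t ^ 2 by ring] at this
      _ = N * Real.exp (t ^ 2 * v / 2) := by
          rw [Finset.sum_const, Finset.card_univ]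
          simp [hNdef]
          ring
  have h3 : t * ∫ ω, G ω ∂ℙ ≤ Real.log N + t ^ 2 * v / 2 := by
    have hL : Real.exp (t * ∫ ω, G ω ∂ℙ) ≤ N * Real.exp (t ^ 2 * v / 2) := by
      rw [← integral_const_mul]
      exact hjensen.trans h2
    have := (Real.le_log_iff_exp_le (by positivity)).mpr hL
    rwa [Real.log_mul (by positivity) (Real.exp_pos _).ne', Real.log_exp] at this
  have heq : Real.log N + t ^ 2 * v / 2 = t * s := by
    rw [htdef]
    field_simp
    nlinarith [hs2]
  rw [heq] at h3
  exact le_of_mul_le_mul_left h3 ht0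

end aux2


/-- For i.i.d. Rademacher signs `η₁,…,ηₙ` and `φ(β) = Σ_i ηᵢ (x_iβ* − x_iβ)²`, if
`|β*|₁ ≤ L` then `E sup_{|β|₁ ≤ L} φ(β) ≤ 3L² (2 M n log(2p²))^{1/2}`. -/
theorem stmt3 {Ω : Type*} [MeasureSpace Ω] [IsProbabilityMeasure (ℙ : Measure Ω)]
    (n p : ℕ) (hn : 0 < n) (hp : 0 < p)
    (x : Fin n → Fin p → ℝ) (βs : Fin p → ℝ)
    (M : ℝ) (hM : M = ⨆ j : Fin p, (1 / n : ℝ) * ∑ i, x i j ^ 4)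
    (L : ℝ) (hL : 0 < L) (hβs : ∑ j, |βs j| ≤ L)
    (η : Fin n → Ω → ℝ)
    (hmeas : ∀ i, Measurable (η i))
    (hindep : iIndepFun η ℙ)
    (hdist : ∀ i, ℙ {ω | η i ω = 1} = 1 / 2 ∧ ℙ {ω | η i ω = -1} = 1 / 2) :
    (∫ ω, ⨆ β : {b : Fin p → ℝ // ∑ j, |b j| ≤ L},
        ∑ i, η i ω * ((∑ j, x i j * βs j) - ∑ j, x i j * β.1 j) ^ 2 ∂ℙ)
      ≤ 3 * L ^ 2 * Real.sqrt (2 * M * n * Real.log (2 * (p : ℝ) ^ 2)) := by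
  classical
  haveI hnp : Nonempty (Fin p) := ⟨⟨0, hp⟩⟩
  haveI : Nonempty {b : Fin p → ℝ // ∑ j, |b j| ≤ L} :=
    ⟨⟨0, by simp [hL.le]⟩⟩
  set c : Fin n → ℝ := fun i => ∑ j, x i j * βs j with hc
  set Z : Fin p × Fin p → Ω → ℝ := fun jk ω => ∑ i, η i ω * (x i jk.1 * x i jk.2) with hZ
  set G : Ω → ℝ := fun ω =>
    Finset.univ.sup' Finset.univ_nonempty (fun jk : Fin p × Fin p => |Z jk ω|) with hG
  set A : Ω → ℝ := fun ω => ∑ i, η i ω * (c i) ^ 2 with hA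
  -- basic facts about M
  have hMge : ∀ j : Fin p, (1 / n : ℝ) * ∑ i, x i j ^ 4 ≤ M := by
    intro j
    rw [hM]
    exact le_ciSup (f := fun j : Fin p => (1 / n : ℝ) * ∑ i, x i j ^ 4)
      (Set.Finite.bddAbove (Set.finite_range _)) j
  have hn' : (0:ℝ) < n := by exact_mod_cast hn
  have hM0 : 0 ≤ M := le_trans (by positivity) (hMge ⟨0, hp⟩)
  have h4 : ∀ j : Fin p, ∑ i, x i j ^ 4 ≤ M * n := by
    intro j
    calc ∑ i, x i j ^ 4 = ((1 / n : ℝ) * ∑ i, x i j ^ 4) * n := by field_simp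
      _ ≤ M * n := mul_le_mul_of_nonneg_right (hMge j) hn'.le
  have hsq : ∀ j k : Fin p, ∑ i, (x i j * x i k) ^ 2 ≤ M * n := by
    intro j k
    have hcs := Finset.sum_mul_sq_le_sq_mul_sq Finset.univ (fun i => x i j ^ 2) (fun i => x i k ^ 2)
    have h1 : (∑ i, (x i j * x i k) ^ 2) ^ 2 ≤ (M * n) ^ 2 := by
      calc (∑ i, (x i j * x i k) ^ 2) ^ 2
          = (∑ i, (x i j ^ 2) * (x i k ^ 2)) ^ 2 := by
            congr 1; exact Finset.sum_congr rfl fun i _ => by ring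
        _ ≤ (∑ i, (x i j ^ 2) ^ 2) * ∑ i, (x i k ^ 2) ^ 2 := hcs
        _ = (∑ i, x i j ^ 4) * ∑ i, x i k ^ 4 := by
            congr 1 <;> exact Finset.sum_congr rfl fun i _ => by ring
        _ ≤ (M * n) * (M * n) := by
            have hk0 : (0:ℝ) ≤ ∑ i, x i k ^ 4 := Finset.sum_nonneg fun i _ => by positivity
            exact mul_le_mul (h4 j) (h4 k) hk0 (by positivity)
        _ = (M * n) ^ 2 := by ring
    have h2 : (0:ℝ) ≤ ∑ i, (x i j * x i k) ^ 2 := Finset.sum_nonneg fun i _ => by positivity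
    have hmn0 : (0:ℝ) ≤ M * n := by positivity
    nlinarith [h1, h2, hmn0]
  -- mgf bound for Z
  have hmgfZ : ∀ (jk : Fin p × Fin p) (t : ℝ),
      ∫ ω, Real.exp (t * Z jk ω) ∂ℙ ≤ Real.exp (t ^ 2 * (M * n) / 2) := by
    intro jk t
    have h1 := rad_mgf n η hmeas hindep hdist (fun i => x i jk.1 * x i jk.2) t
    have h2 : (fun ω => Real.exp (t * Z jk ω))
        = fun ω => Real.exp (t * ∑ i, (x i jk.1 * x i jk.2) * η i ω) := by
      funext ω
      congr 1
      rw [hZ]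
      exact congrArg (t * ·) (Finset.sum_congr rfl fun i _ => mul_comm _ _)
    rw [h2]
    refine h1.trans (Real.exp_le_exp.mpr ?_)
    have := hsq jk.1 jk.2
    have ht2 : (0:ℝ) ≤ t ^ 2 := sq_nonneg t
    nlinarith
  -- measurability and bounds
  have hZm : ∀ jk : Fin p × Fin p, Measurable (Z jk) := by
    intro jk
    exact Finset.measurable_sum _ fun i _ => (hmeas i).mul_const _
  have hηae : ∀ᵐ ω ∂ℙ, ∀ i, |η i ω| ≤ 1 := by
    rw [ae_all_iff]
    intro i
    filter_upwards [rad_ae (η i) (hmeas i) (hdist i).1 (hdist i).2] with ω h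
    rcases h with h | h <;> simp [h]
  set C : ℝ := ∑ i, (∑ j, |x i j|) ^ 2 with hCdef
  have hZb : ∀ jk : Fin p × Fin p, ∀ᵐ ω ∂ℙ, |Z jk ω| ≤ C := by
    intro jk
    filter_upwards [hηae] with ω h
    calc |Z jk ω| ≤ ∑ i, |η i ω * (x i jk.1 * x i jk.2)| :=
          Finset.abs_sum_le_sum_abs _ _
      _ ≤ C := by
          rw [hCdef]
          refine Finset.sum_le_sum fun i _ => ?_
          have h1 : |x i jk.1| ≤ ∑ j, |x i j| :=
            Finset.single_le_sum (f := fun j => |x i j|) (fun j _ => abs_nonneg _)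
              (Finset.mem_univ jk.1)
          have h2 : |x i jk.2| ≤ ∑ j, |x i j| :=
            Finset.single_le_sum (f := fun j => |x i j|) (fun j _ => abs_nonneg _)
              (Finset.mem_univ jk.2)
          have h3 : |η i ω * (x i jk.1 * x i jk.2)| = |η i ω| * (|x i jk.1| * |x i jk.2|) := by
            rw [abs_mul, abs_mul]
          rw [h3]
          have h0 : (0:ℝ) ≤ ∑ j, |x i j| := Finset.sum_nonneg fun j _ => abs_nonneg _
          have hm : |x i jk.1| * |x i jk.2| ≤ (∑ j, |x i j|) * (∑ j, |x i j|) :=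
            mul_le_mul h1 h2 (abs_nonneg _) h0
          nlinarith [hm, h i, abs_nonneg (η i ω),
            mul_nonneg (abs_nonneg (x i jk.1)) (abs_nonneg (x i jk.2))]
  -- G facts
  have hGm : Measurable G := by
    have h := Finset.measurable_sup' (Finset.univ_nonempty (α := Fin p × Fin p))
      (f := fun jk => fun ω => |Z jk ω|) (fun jk _ => (hZm jk).abs)
    have heq : G = Finset.univ.sup' Finset.univ_nonempty (fun jk => fun ω => |Z jk ω|) := by
      funext ω; rw [hG, Finset.sup'_apply]
    rwa [heq]
  have hG0 : ∀ ω, 0 ≤ G ω := fun ω =>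
    le_trans (abs_nonneg (Z (Classical.arbitrary _) ω))
      (Finset.le_sup' (fun jk => |Z jk ω|) (Finset.mem_univ (Classical.arbitrary _)))
  have hGb : ∀ᵐ ω ∂ℙ, G ω ≤ C := by
    filter_upwards [ae_all_iff.mpr hZb] with ω h
    exact Finset.sup'_le _ _ fun jk _ => h jk
  have hGint : Integrable G ℙ := by
    refine ⟨hGm.aestronglyMeasurable, HasFiniteIntegral.of_bounded (C := C) ?_⟩
    filter_upwards [hGb] with ω h
    rw [Real.norm_eq_abs, abs_of_nonneg (hG0 ω)]; exact h
  -- expectation of G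
  have hGle : ∫ ω, G ω ∂ℙ ≤ Real.sqrt (2 * M * n * Real.log (2 * (p:ℝ) ^ 2)) := by
    rcases eq_or_lt_of_le (by positivity : (0:ℝ) ≤ M * n) with hMn | hMn
    · -- M * n = 0, hence M = 0 and all x = 0
      have hMzero : M = 0 := by
        rcases mul_eq_zero.mp hMn.symm with h | h
        · exact h
        · exact absurd h (by positivity)
      have hx0 : ∀ i j, x i j = 0 := by
        intro i j
        have h1 := h4 j
        rw [hMzero, zero_mul] at h1
        have h2 : ∀ i' ∈ Finset.univ, (0:ℝ) ≤ x i' j ^ 4 := fun i' _ => by positivity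
        have h3 : ∑ i', x i' j ^ 4 = 0 := le_antisymm h1 (Finset.sum_nonneg h2)
        have := (Finset.sum_eq_zero_iff_of_nonneg h2).mp h3 i (Finset.mem_univ i)
        exact pow_eq_zero_iff (by norm_num) |>.mp this
      have hGzero : G = fun _ => (0:ℝ) := by
        funext ω
        rw [hG]
        have : ∀ jk : Fin p × Fin p, |Z jk ω| = 0 := by
          intro jk
          simp [hZ, hx0]
        simp only [this]
        exact Finset.sup'_const _ _
      rw [hGzero, integral_zero]
      positivity
    · -- M * n > 0
      have h := max_exp Z hZm C hZb (M * n) hMn hmgfZ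
      have hcard : (Fintype.card (Fin p × Fin p) : ℝ) = (p:ℝ) ^ 2 := by
        simp [Fintype.card_prod]
        ring
      calc ∫ ω, G ω ∂ℙ
          ≤ Real.sqrt (2 * (M * n) * Real.log (2 * Fintype.card (Fin p × Fin p))) := h
        _ = Real.sqrt (2 * M * n * Real.log (2 * (p:ℝ) ^ 2)) := by
            rw [hcard]; ring_nf
  -- integrability
  have hηint : ∀ i, Integrable (η i) ℙ := by
    intro i
    refine ⟨(hmeas i).aestronglyMeasurable, HasFiniteIntegral.of_bounded (C := 1) ?_⟩
    filter_upwards [hηae] with ω h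
    rw [Real.norm_eq_abs]; exact h i
  have hηzero : ∀ i, ∫ ω, η i ω ∂ℙ = 0 := by
    intro i
    have := rad_int (η i) (hmeas i) (hdist i).1 (hdist i).2 id
    simpa using this
  have hAint : Integrable A ℙ :=
    integrable_finset_sum _ fun i _ => (hηint i).mul_const _
  have hAzero : ∫ ω, A ω ∂ℙ = 0 := by
    rw [hA, integral_finset_sum _ fun i _ => (hηint i).mul_const _]
    refine Finset.sum_eq_zero fun i _ => ?_
    rw [integral_mul_const, hηzero i, zero_mul]
  -- pointwise bound
  have hptw : ∀ ω, (⨆ β : {b : Fin p → ℝ // ∑ j, |b j| ≤ L},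
      ∑ i, η i ω * (c i - ∑ j, x i j * β.1 j) ^ 2) ≤ A ω + 3 * L ^ 2 * G ω := by
    intro ω
    refine ciSup_le fun β => ?_
    set b : Fin p → ℝ := β.1 with hb
    set d : Fin n → ℝ := fun i => ∑ j, x i j * b j with hd
    have key : ∀ i, ∑ j, ∑ k, (b j * b k - 2 * βs j * b k) * (η i ω * (x i j * x i k))
        = η i ω * ((d i) ^ 2 - 2 * (c i * d i)) := by
      intro i
      have e1 : (d i) ^ 2 = ∑ j, ∑ k, (x i j * b j) * (x i k * b k) := by
        rw [hd, pow_two]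
        exact Finset.sum_mul_sum _ _ _ _
      have e2 : c i * d i = ∑ j, ∑ k, (x i j * βs j) * (x i k * b k) := by
        rw [hc, hd]
        exact Finset.sum_mul_sum _ _ _ _
      rw [e1, e2]
      simp only [Finset.mul_sum, ← Finset.sum_sub_distrib]
      exact Finset.sum_congr rfl fun j _ => Finset.sum_congr rfl fun k _ => by ring
    have hswap : ∑ j, ∑ k, (b j * b k - 2 * βs j * b k) * Z (j, k) ω
        = ∑ i, η i ω * ((d i) ^ 2 - 2 * (c i * d i)) := by
      have : ∀ j k : Fin p, (b j * b k - 2 * βs j * b k) * Z (j, k) ω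
          = ∑ i, (b j * b k - 2 * βs j * b k) * (η i ω * (x i j * x i k)) := by
        intro j k; rw [hZ, Finset.mul_sum]
      simp only [this]
      calc ∑ j, ∑ k, ∑ i, (b j * b k - 2 * βs j * b k) * (η i ω * (x i j * x i k))
          = ∑ j, ∑ i, ∑ k, (b j * b k - 2 * βs j * b k) * (η i ω * (x i j * x i k)) :=
            Finset.sum_congr rfl fun j _ => Finset.sum_comm
        _ = ∑ i, ∑ j, ∑ k, (b j * b k - 2 * βs j * b k) * (η i ω * (x i j * x i k)) := Finset.sum_comm
        _ = ∑ i, η i ω * ((d i) ^ 2 - 2 * (c i * d i)) :=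
            Finset.sum_congr rfl fun i _ => key i
    have hid : ∑ i, η i ω * (c i - d i) ^ 2
        = A ω + ∑ j, ∑ k, (b j * b k - 2 * βs j * b k) * Z (j, k) ω := by
      rw [hswap, hA, ← Finset.sum_add_distrib]
      exact Finset.sum_congr rfl fun i _ => by ring
    rw [show (∑ i, η i ω * (c i - ∑ j, x i j * β.1 j) ^ 2)
        = ∑ i, η i ω * (c i - d i) ^ 2 from rfl, hid]
    refine add_le_add_right ?_ (A ω)
    have hcoef : ∑ j, ∑ k, |b j * b k - 2 * βs j * b k| ≤ 3 * L ^ 2 := by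
      have hb1 : ∑ j, |b j| ≤ L := β.2
      have hb0 : 0 ≤ ∑ j, |b j| := Finset.sum_nonneg fun j _ => abs_nonneg _
      have hβ0 : 0 ≤ ∑ j, |βs j| := Finset.sum_nonneg fun j _ => abs_nonneg _
      calc ∑ j, ∑ k, |b j * b k - 2 * βs j * b k|
          ≤ ∑ j, ∑ k, (|b j| * |b k| + 2 * |βs j| * |b k|) := by
            refine Finset.sum_le_sum fun j _ => Finset.sum_le_sum fun k _ => ?_
            calc |b j * b k - 2 * βs j * b k|
                ≤ |b j * b k| + |2 * βs j * b k| := abs_sub _ _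
              _ = |b j| * |b k| + 2 * |βs j| * |b k| := by
                  rw [abs_mul, abs_mul, abs_mul]
                  norm_num
        _ = (∑ j, |b j|) * (∑ j, |b j|) + 2 * ((∑ j, |βs j|) * (∑ j, |b j|)) := by
            rw [Finset.sum_mul_sum, Finset.sum_mul_sum, Finset.mul_sum, ← Finset.sum_add_distrib]
            refine Finset.sum_congr rfl fun j _ => ?_
            rw [Finset.mul_sum, ← Finset.sum_add_distrib]
            exact Finset.sum_congr rfl fun k _ => by ring
        _ ≤ 3 * L ^ 2 := by nlinarith
    have hstep : ∑ j, ∑ k, (b j * b k - 2 * βs j * b k) * Z (j, k) ω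
        ≤ (∑ j, ∑ k, |b j * b k - 2 * βs j * b k|) * G ω := by
      rw [Finset.sum_mul]
      refine Finset.sum_le_sum fun j _ => ?_
      rw [Finset.sum_mul]
      refine Finset.sum_le_sum fun k _ => ?_
      calc (b j * b k - 2 * βs j * b k) * Z (j, k) ω
          ≤ |(b j * b k - 2 * βs j * b k) * Z (j, k) ω| := le_abs_self _
        _ = |b j * b k - 2 * βs j * b k| * |Z (j, k) ω| := abs_mul _ _
        _ ≤ |b j * b k - 2 * βs j * b k| * G ω := by
            refine mul_le_mul_of_nonneg_left ?_ (abs_nonneg _)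
            exact Finset.le_sup' (fun jk : Fin p × Fin p => |Z jk ω|)
              (Finset.mem_univ (j, k))
    refine hstep.trans ?_
    exact mul_le_mul_of_nonneg_right hcoef (hG0 ω)
  -- conclusion
  by_cases hf : Integrable (fun ω => ⨆ β : {b : Fin p → ℝ // ∑ j, |b j| ≤ L},
      ∑ i, η i ω * (c i - ∑ j, x i j * β.1 j) ^ 2) ℙ
  · have hsumint : Integrable (fun ω => A ω + 3 * L ^ 2 * G ω) ℙ :=
      hAint.add (hGint.const_mul _)
    have h1 := integral_mono hf hsumint hptw
    rw [integral_add hAint (hGint.const_mul _), hAzero, integral_const_mul, zero_add] at h1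
    refine h1.trans ?_
    exact mul_le_mul_of_nonneg_left hGle (by positivity)
  · rw [integral_undef hf]
    positivity
end

section
/- Let S ⊆ {1,…,n} and suppose β̂ is a random vector in ℝ^p, measurable with respect to (ε_i)_{i∈S}, such that |β̂|₁ ≤ L and Σ_{i∈S}(y_i − x_iβ̂)² ≤ Σ_{i∈S}(y_i − x_iβ*)², where y_i = x_iβ* + ε_i. If |β*|₁ ≤ L, then E( Σ_{i∈S} (x_iβ* − x_iβ̂)² ) ≤ 2Lσ (2M^{1/2} n log(2p))^{1/2}. -/
open MeasureTheory ProbabilityTheory Real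
open scoped NNReal ENNReal

lemma gpdf_shift (v : ℝ≥0) (hv : (v:ℝ) ≠ 0) (t x : ℝ) :
    rexp (t * x) * gaussianPDFReal 0 v x
      = rexp ((v:ℝ) * t ^ 2 / 2) * gaussianPDFReal (t * v) v x := by
  simp only [gaussianPDFReal, sub_zero]
  have h : t * x + -x ^ 2 / (2 * (v:ℝ)) = (v:ℝ) * t ^ 2 / 2 + -(x - t * v) ^ 2 / (2 * (v:ℝ)) := by
    field_simp
    ring
  calc rexp (t * x) * ((√(2 * π * v))⁻¹ * rexp (-x ^ 2 / (2 * (v:ℝ))))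
      = (√(2 * π * v))⁻¹ * rexp (t * x + -x ^ 2 / (2 * (v:ℝ))) := by rw [Real.exp_add]; ring
    _ = (√(2 * π * v))⁻¹ * rexp ((v:ℝ) * t ^ 2 / 2 + -(x - t * v) ^ 2 / (2 * (v:ℝ))) := by rw [h]
    _ = rexp ((v:ℝ) * t ^ 2 / 2) * ((√(2 * π * v))⁻¹ * rexp (-(x - t * v) ^ 2 / (2 * (v:ℝ)))) := by
        rw [Real.exp_add]; ring

lemma integrable_exp_mul_gauss (v : ℝ≥0) (t : ℝ) :
    Integrable (fun x => rexp (t * x)) (gaussianReal 0 v) := by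
  by_cases hv : v = 0
  · subst hv
    rw [gaussianReal_zero_var]
    refine ⟨((measurable_const_mul t).exp).aestronglyMeasurable, ?_⟩
    change ∫⁻ x, ‖rexp (t * x)‖ₑ ∂(Measure.dirac 0) < ⊤
    rw [lintegral_dirac' _ ((measurable_const_mul t).exp.enorm)]
    exact enorm_lt_top
  · rw [gaussianReal_of_var_ne_zero _ hv]
    rw [integrable_withDensity_iff (measurable_gaussianPDF _ _)
      (Filter.Eventually.of_forall fun x => ENNReal.ofReal_lt_top)]
    have : (fun x => rexp (t * x) * (gaussianPDF 0 v x).toReal)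
        = fun x => rexp ((v:ℝ) * t^2/2) * gaussianPDFReal (t*v) v x := by
      ext x
      rw [gaussianPDF, ENNReal.toReal_ofReal (gaussianPDFReal_nonneg _ _ _),
        gpdf_shift v (by exact_mod_cast hv) t x]
    rw [this]
    exact (integrable_gaussianPDFReal _ _).const_mul _

lemma integral_exp_mul_gauss (v : ℝ≥0) (t : ℝ) :
    ∫ x, rexp (t * x) ∂(gaussianReal 0 v) = rexp ((v:ℝ) * t ^ 2 / 2) := by
  by_cases hv : v = 0
  · subst hv
    rw [gaussianReal_zero_var, integral_dirac]
    simp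
  · rw [gaussianReal_of_var_ne_zero _ hv]
    have hpdf : gaussianPDF 0 v = fun x => ((Real.toNNReal (gaussianPDFReal 0 v x) : ℝ≥0) : ℝ≥0∞) := by
      ext x; rw [gaussianPDF, ENNReal.ofReal]
    rw [hpdf, integral_withDensity_eq_integral_smul
      (measurable_gaussianPDFReal 0 v).real_toNNReal]
    have : (fun x => (Real.toNNReal (gaussianPDFReal 0 v x)) • rexp (t * x))
        = fun x => rexp ((v:ℝ) * t^2/2) * gaussianPDFReal (t*v) v x := by
      ext x
      rw [NNReal.smul_def, smul_eq_mul, Real.coe_toNNReal _ (gaussianPDFReal_nonneg _ _ _),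
        mul_comm, gpdf_shift v (by exact_mod_cast hv) t x]
    rw [this, integral_const_mul, integral_gaussianPDFReal_eq_one _ hv, mul_one]



lemma abs_le_exp_add_exp (x : ℝ) : |x| ≤ rexp x + rexp (-x) := by
  rcases abs_cases x with ⟨h, _⟩ | ⟨h, _⟩
  · rw [h]
    have := Real.add_one_le_exp x
    have := (Real.exp_pos (-x)).le
    linarith
  · rw [h]
    have := Real.add_one_le_exp (-x)
    have := (Real.exp_pos x).le
    linarith

lemma integrable_id_gauss (v : ℝ≥0) : Integrable (fun x : ℝ => x) (gaussianReal 0 v) := by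
  refine Integrable.mono' ((integrable_exp_mul_gauss v 1).add (integrable_exp_mul_gauss v (-1)))
    measurable_id.aestronglyMeasurable (Filter.Eventually.of_forall fun x => ?_)
  simp only [one_mul, neg_one_mul]
  exact abs_le_exp_add_exp x

lemma integral_id_gauss (v : ℝ≥0) : ∫ x, x ∂(gaussianReal 0 v) = 0 := by
  have hmap : (gaussianReal 0 v).map (fun x => (-1 : ℝ) * x) = gaussianReal 0 v := by
    rw [gaussianReal_map_const_mul]
    norm_num
  have h1 : ∫ x, x ∂(gaussianReal 0 v) = ∫ x, (-1 : ℝ) * x ∂(gaussianReal 0 v) := by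
    nth_rewrite 1 [← hmap]
    rw [integral_map (f := fun x => x) (measurable_const_mul _).aemeasurable aestronglyMeasurable_id]
  rw [integral_const_mul] at h1
  linarith

set_option maxHeartbeats 1000000 in
/-- If `β̂` is measurable w.r.t. `(εᵢ)_{i∈S}`, satisfies `|β̂|₁ ≤ L` and
`Σ_{i∈S}(yᵢ − x_iβ̂)² ≤ Σ_{i∈S}(yᵢ − x_iβ*)²`, and `|β*|₁ ≤ L`, then
`E Σ_{i∈S} (x_iβ* − x_iβ̂)² ≤ 2Lσ (2 M^{1/2} n log(2p))^{1/2}`. -/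
theorem stmt4 {Ω : Type*} [MeasureSpace Ω] [IsProbabilityMeasure (ℙ : Measure Ω)]
    (n p : ℕ) (hn : 0 < n) (hp : 0 < p)
    (x : Fin n → Fin p → ℝ) (βs : Fin p → ℝ)
    (M : ℝ) (hM : M = ⨆ j : Fin p, (1 / n : ℝ) * ∑ i, x i j ^ 4)
    (L : ℝ) (hL : 0 < L) (hβs : ∑ j, |βs j| ≤ L)
    (σ : ℝ) (hσ : 0 < σ)
    (ε : Fin n → Ω → ℝ)
    (hmeas : ∀ i, Measurable (ε i))
    (hindep : iIndepFun ε ℙ)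
    (hgauss : ∀ i, Measure.map (ε i) ℙ = gaussianReal 0 ⟨σ ^ 2, sq_nonneg σ⟩)
    (y : Fin n → Ω → ℝ) (hy : ∀ i ω, y i ω = ∑ j, x i j * βs j + ε i ω)
    (S : Finset (Fin n))
    (βhat : Ω → Fin p → ℝ)
    (hβmeas : @Measurable Ω (Fin p → ℝ)
      (MeasurableSpace.comap (fun ω (i : S) => ε i.1 ω) inferInstance) _ βhat)
    (hβL : ∀ ω, ∑ j, |βhat ω j| ≤ L)
    (hβmin : ∀ ω, ∑ i ∈ S, (y i ω - ∑ j, x i j * βhat ω j) ^ 2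
      ≤ ∑ i ∈ S, (y i ω - ∑ j, x i j * βs j) ^ 2) :
    ∫ ω, ∑ i ∈ S, ((∑ j, x i j * βs j) - ∑ j, x i j * βhat ω j) ^ 2 ∂ℙ
      ≤ 2 * L * σ * Real.sqrt (2 * Real.sqrt M * n * Real.log (2 * p)) := by
  classical
  have hMub : ∀ j, (1/n : ℝ) * ∑ i, x i j ^ 4 ≤ M := by
    intro j
    rw [hM]
    exact le_ciSup (f := fun j => (1/n : ℝ) * ∑ i, x i j ^ 4)
      (Set.Finite.bddAbove (Set.finite_range _)) j
  have hM0 : 0 ≤ M := le_trans (by positivity) (hMub ⟨0, hp⟩)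
  by_cases hM0' : M = 0
  · -- degenerate case : all x are zero
    have hxz : ∀ i j, x i j = 0 := by
      intro i j
      have h1 : (1/n:ℝ) * ∑ i', x i' j ^ 4 ≤ 0 := hM0' ▸ hMub j
      have h2 : (0:ℝ) ≤ ∑ i', x i' j ^ 4 := Finset.sum_nonneg fun i' _ => by positivity
      have hn' : (0:ℝ) < 1/n := by positivity
      have h3 : ∑ i', x i' j ^ 4 = 0 := le_antisymm (by nlinarith) h2
      have h4 := (Finset.sum_eq_zero_iff_of_nonneg (fun i' _ => by positivity)).1 h3 i
        (Finset.mem_univ i)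
      exact pow_eq_zero_iff (by norm_num) |>.1 h4
    have hz : ∀ ω, ∑ i ∈ S, ((∑ j, x i j * βs j) - ∑ j, x i j * βhat ω j) ^ 2 = 0 := by
      intro ω; apply Finset.sum_eq_zero; intro i _; simp [hxz]
    simp only [hz, integral_zero]
    positivity
  have hMpos : 0 < M := lt_of_le_of_ne hM0 (Ne.symm hM0')
  -- measurability of βhat
  have hβhat_meas : Measurable βhat := by
    have hcm : Measurable (fun ω (i : S) => ε i.1 ω) :=
      measurable_pi_lambda _ fun i => hmeas i.1
    exact hβmeas.mono hcm.comap_le le_rfl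
  have hβj : ∀ j, Measurable fun ω => βhat ω j := fun j => (measurable_pi_apply j).comp hβhat_meas
  -- facts about ε
  set v : ℝ≥0 := ⟨σ ^ 2, sq_nonneg σ⟩ with hvdef
  have hεint : ∀ i, Integrable (ε i) ℙ := by
    intro i
    have h := (integrable_map_measure (g := fun x' : ℝ => x') aestronglyMeasurable_id
      (hmeas i).aemeasurable).1 (by rw [hgauss i]; exact integrable_id_gauss v)
    exact h
  have hεmean : ∀ i, ∫ ω, ε i ω ∂ℙ = 0 := by
    intro i
    have h : ∫ ω, ε i ω ∂ℙ = ∫ x', (fun x'' => x'') x' ∂(Measure.map (ε i) ℙ) :=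
      (integral_map (hmeas i).aemeasurable aestronglyMeasurable_id).symm
    rw [h, hgauss i, integral_id_gauss]
  have hεexp_int : ∀ (i) (s : ℝ), Integrable (fun ω => rexp (s * ε i ω)) ℙ := by
    intro i s
    have h := integrable_exp_mul_gauss v s
    have h2 := (integrable_map_measure (g := fun x' : ℝ => rexp (s * x'))
      ((measurable_const_mul s).exp).aestronglyMeasurable (hmeas i).aemeasurable).1
      (by rw [hgauss i]; exact h)
    exact h2
  have hεmgf : ∀ (i) (s : ℝ), ∫ ω, rexp (s * ε i ω) ∂ℙ = rexp (σ ^ 2 * s ^ 2 / 2) := by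
    intro i s
    have h : ∫ ω, rexp (s * ε i ω) ∂ℙ = ∫ x', rexp (s * x') ∂(Measure.map (ε i) ℙ) :=
      (integral_map (hmeas i).aemeasurable ((measurable_const_mul s).exp).aestronglyMeasurable).symm
    rw [h, hgauss i, integral_exp_mul_gauss]
    rfl
  -- the variables V j
  set V : Fin p → Ω → ℝ := fun j ω => ∑ i ∈ S, x i j * ε i ω with hVdef
  have hVmeas : ∀ j, Measurable (V j) := fun j =>
    Finset.measurable_sum _ fun i _ => (hmeas i).const_mul _
  have hVint : ∀ j, Integrable (V j) ℙ := fun j =>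
    integrable_finset_sum _ fun i _ => (hεint i).const_mul _
  have hVmean : ∀ j, ∫ ω, V j ω ∂ℙ = 0 := by
    intro j
    simp only [hVdef]
    rw [integral_finset_sum _ fun i _ => (hεint i).const_mul _]
    exact Finset.sum_eq_zero fun i _ => by rw [integral_const_mul, hεmean, mul_zero]
  -- Z = max_j |V j|
  have hpe : Nonempty (Fin p) := ⟨⟨0, hp⟩⟩
  have hune : (Finset.univ : Finset (Fin p)).Nonempty := Finset.univ_nonempty
  set Z : Ω → ℝ := fun ω => Finset.univ.sup' hune (fun j => |V j ω|) with hZdef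
  have hZle : ∀ j ω, |V j ω| ≤ Z ω := by
    intro j ω
    show |V j ω| ≤ Finset.univ.sup' hune fun j' => |V j' ω|
    exact Finset.le_sup' (fun j' => |V j' ω|) (Finset.mem_univ j)
  have hZ0 : ∀ ω, 0 ≤ Z ω := fun ω => (abs_nonneg _).trans (hZle ⟨0, hp⟩ ω)
  have hZsum : ∀ ω, Z ω ≤ ∑ j, |V j ω| := by
    intro ω
    show (Finset.univ.sup' hune fun j' => |V j' ω|) ≤ _
    exact (Finset.sup'_le_iff hune (fun j' => |V j' ω|)).2 fun j _ =>
      Finset.single_le_sum (f := fun j' => |V j' ω|) (fun k _ => abs_nonneg _) (Finset.mem_univ j)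
  have hZmeas : Measurable Z := by
    have h : Z = Finset.univ.sup' hune (fun j => fun ω => |V j ω|) := by
      ext ω
      rw [hZdef, Finset.sup'_apply]
    rw [h]
    exact Finset.measurable_sup' _ fun j _ => (hVmeas j).abs
  have hZint : Integrable Z ℙ := by
    refine Integrable.mono' (g := fun ω => ∑ j, |V j ω|)
      (integrable_finset_sum _ fun j _ => (hVint j).abs)
      hZmeas.aestronglyMeasurable (Filter.Eventually.of_forall fun ω => ?_)
    rw [Real.norm_eq_abs, abs_of_nonneg (hZ0 ω)]
    exact hZsum ω
  -- τ and variance bounds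
  set τ : ℝ := σ * Real.sqrt ((n:ℝ) * Real.sqrt M) with hτdef
  have hτpos : 0 < τ := by
    have : (0:ℝ) < (n:ℝ) * Real.sqrt M := by
      have := Real.sqrt_pos.2 hMpos
      have hn' : (0:ℝ) < n := by exact_mod_cast hn
      positivity
    positivity
  have hx2 : ∀ j, ∑ i ∈ S, x i j ^ 2 ≤ (n:ℝ) * Real.sqrt M := by
    intro j
    have cs := Finset.sum_mul_sq_le_sq_mul_sq S (fun _ => (1:ℝ)) (fun i => x i j ^ 2)
    simp only [one_mul, one_pow] at cs
    -- cs : (∑ i ∈ S, x i j ^ 2) ^ 2 ≤ (∑ i ∈ S, 1) * ∑ i ∈ S, (x i j ^ 2) ^ 2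
    have hcard : (∑ _i ∈ S, (1:ℝ)) ≤ (n:ℝ) := by
      rw [Finset.sum_const, nsmul_eq_mul, mul_one]
      exact_mod_cast (Finset.card_le_univ S).trans_eq (by simp)
    have hsum4 : ∑ i ∈ S, (x i j ^ 2) ^ 2 ≤ (n:ℝ) * M := by
      have h1 : ∑ i ∈ S, (x i j ^ 2) ^ 2 ≤ ∑ i, x i j ^ 4 := by
        calc ∑ i ∈ S, (x i j ^ 2) ^ 2 = ∑ i ∈ S, x i j ^ 4 := by
              apply Finset.sum_congr rfl; intros; ring
          _ ≤ ∑ i, x i j ^ 4 := Finset.sum_le_sum_of_subset_of_nonneg (Finset.subset_univ S)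
              (fun i _ _ => by positivity)
      have h2 : ∑ i, x i j ^ 4 ≤ (n:ℝ) * M := by
        have := hMub j
        have hn' : (0:ℝ) < n := by exact_mod_cast hn
        rw [div_mul_eq_mul_div, one_mul, div_le_iff₀ hn'] at this
        linarith [this]
      linarith
    have ha0 : (0:ℝ) ≤ ∑ i ∈ S, x i j ^ 2 := Finset.sum_nonneg fun i _ => sq_nonneg _
    have key : (∑ i ∈ S, x i j ^ 2) ^ 2 ≤ ((n:ℝ) * Real.sqrt M) ^ 2 := by
      have hrhs : ((n:ℝ) * Real.sqrt M) ^ 2 = (n:ℝ)^2 * M := by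
        rw [mul_pow, Real.sq_sqrt hM0]
      rw [hrhs]
      have hS1 : (0:ℝ) ≤ ∑ i ∈ S, (x i j ^ 2) ^ 2 := Finset.sum_nonneg fun i _ => sq_nonneg _
      nlinarith [cs, hcard, hsum4, hS1]
    calc ∑ i ∈ S, x i j ^ 2 = Real.sqrt ((∑ i ∈ S, x i j ^ 2) ^ 2) := (Real.sqrt_sq ha0).symm
      _ ≤ Real.sqrt (((n:ℝ) * Real.sqrt M) ^ 2) := Real.sqrt_le_sqrt key
      _ = (n:ℝ) * Real.sqrt M := Real.sqrt_sq (by positivity)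
  have hτsq : τ ^ 2 = σ ^ 2 * ((n:ℝ) * Real.sqrt M) := by
    rw [hτdef, mul_pow, Real.sq_sqrt (by positivity)]
  -- mgf of V j
  have hindepX : ∀ j, iIndepFun (fun i ω => x i j * ε i ω) ℙ := by
    intro j
    exact hindep.comp (fun i (r : ℝ) => x i j * r) (fun i => measurable_const_mul _)
  have hexpint : ∀ (j) (t : ℝ), Integrable (fun ω => rexp (t * V j ω)) ℙ := by
    intro j t
    have h := (hindepX j).integrable_exp_mul_sum (fun i => (hmeas i).const_mul _)
      (s := S) (fun i _ => by simpa [mul_assoc] using hεexp_int i (t * x i j))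
    simpa [Finset.sum_apply, hVdef] using h
  have hVmgf : ∀ (j) (t : ℝ), ∫ ω, rexp (t * V j ω) ∂ℙ ≤ rexp (t ^ 2 * τ ^ 2 / 2) := by
    intro j t
    have hsum : mgf (∑ i ∈ S, fun ω => x i j * ε i ω) ℙ t
        = ∏ i ∈ S, mgf (fun ω => x i j * ε i ω) ℙ t :=
      (hindepX j).mgf_sum (fun i => (hmeas i).const_mul _) S
    have heq : ∫ ω, rexp (t * V j ω) ∂ℙ = mgf (∑ i ∈ S, fun ω => x i j * ε i ω) ℙ t := by
      rw [mgf]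
      congr 1
      ext ω
      simp [Finset.sum_apply, hVdef]
    have hterm : ∀ i, mgf (fun ω => x i j * ε i ω) ℙ t = rexp (σ ^ 2 * (t * x i j) ^ 2 / 2) := by
      intro i
      rw [mgf]
      have h1 : (fun ω => rexp (t * (x i j * ε i ω))) = fun ω => rexp ((t * x i j) * ε i ω) := by
        ext ω; ring_nf
      calc (∫ ω, rexp (t * (x i j * ε i ω)) ∂ℙ) = ∫ ω, rexp ((t * x i j) * ε i ω) ∂ℙ := by rw [h1]
        _ = rexp (σ ^ 2 * (t * x i j) ^ 2 / 2) := hεmgf i _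
    rw [heq, hsum, Finset.prod_congr rfl fun i _ => hterm i, ← Real.exp_sum]
    apply Real.exp_le_exp.2
    have hsc : ∑ i ∈ S, σ ^ 2 * (t * x i j) ^ 2 / 2 = t ^ 2 * σ ^ 2 / 2 * ∑ i ∈ S, x i j ^ 2 := by
      rw [Finset.mul_sum]
      apply Finset.sum_congr rfl; intros; ring
    rw [hsc, hτsq]
    have h2 : t ^ 2 * σ ^ 2 / 2 * ∑ i ∈ S, x i j ^ 2 ≤ t ^ 2 * σ ^ 2 / 2 * ((n:ℝ) * Real.sqrt M) :=
      mul_le_mul_of_nonneg_left (hx2 j) (by positivity)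
    calc t ^ 2 * σ ^ 2 / 2 * ∑ i ∈ S, x i j ^ 2 ≤ t ^ 2 * σ ^ 2 / 2 * ((n:ℝ) * Real.sqrt M) := h2
      _ = t ^ 2 * (σ ^ 2 * ((n:ℝ) * Real.sqrt M)) / 2 := by ring
  -- maximal inequality: E Z ≤ τ * sqrt (2 * log (2p))
  set K : ℝ := Real.log (2 * (p:ℝ)) with hKdef
  have hKpos : 0 < K := by
    apply Real.log_pos
    have h1 : (1:ℝ) ≤ (p:ℝ) := by exact_mod_cast hp
    linarith
  set lam : ℝ := Real.sqrt (2 * K) / τ with hlamdef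
  have hlampos : 0 < lam := div_pos (Real.sqrt_pos.2 (by linarith)) hτpos
  have hlamsq : lam ^ 2 * τ ^ 2 = 2 * K := by
    rw [hlamdef, div_pow, Real.sq_sqrt (by linarith)]
    field_simp
  have hintj : ∀ j, Integrable (fun ω => rexp (lam * V j ω) + rexp (-lam * V j ω)) ℙ :=
    fun j => (hexpint j lam).add (hexpint j (-lam))
  have hptw : ∀ ω, rexp (lam * Z ω) ≤ ∑ j, (rexp (lam * V j ω) + rexp (-lam * V j ω)) := by
    intro ω
    obtain ⟨j0, -, hj0⟩ := Finset.exists_mem_eq_sup' hune (fun j => |V j ω|)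
    have hZω : Z ω = |V j0 ω| := hj0
    have h1 : rexp (lam * Z ω) ≤ rexp (lam * V j0 ω) + rexp (-lam * V j0 ω) := by
      rw [hZω]
      rcases abs_cases (V j0 ω) with ⟨he, -⟩ | ⟨he, -⟩
      · rw [he]
        nlinarith [Real.exp_pos (-lam * V j0 ω)]
      · rw [he, mul_neg, ← neg_mul]
        nlinarith [Real.exp_pos (lam * V j0 ω)]
    refine h1.trans ?_
    exact Finset.single_le_sum
      (f := fun j => rexp (lam * V j ω) + rexp (-lam * V j ω))
      (fun j _ => by positivity) (Finset.mem_univ j0)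
  have hEint : Integrable (fun ω => rexp (lam * Z ω)) ℙ := by
    refine Integrable.mono'
      (g := fun ω => ∑ j, (rexp (lam * V j ω) + rexp (-lam * V j ω)))
      (integrable_finset_sum _ fun j _ => hintj j)
      ((hZmeas.const_mul lam).exp.aestronglyMeasurable)
      (Filter.Eventually.of_forall fun ω => ?_)
    rw [Real.norm_eq_abs, abs_of_nonneg (Real.exp_pos _).le]
    exact hptw ω
  have hjensen : rexp (lam * ∫ ω, Z ω ∂ℙ) ≤ ∫ ω, rexp (lam * Z ω) ∂ℙ := by
    have h := convexOn_exp.map_integral_le (f := fun ω => lam * Z ω)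
      continuous_exp.continuousOn isClosed_univ
      (Filter.Eventually.of_forall fun ω => Set.mem_univ _)
      (hZint.const_mul lam) (by exact hEint)
    rwa [integral_const_mul] at h
  have hmax : ∫ ω, Z ω ∂ℙ ≤ τ * Real.sqrt (2 * K) := by
    have h2 : ∫ ω, rexp (lam * Z ω) ∂ℙ ≤ 2 * (p:ℝ) * rexp (lam ^ 2 * τ ^ 2 / 2) := by
      calc ∫ ω, rexp (lam * Z ω) ∂ℙ
          ≤ ∫ ω, ∑ j, (rexp (lam * V j ω) + rexp (-lam * V j ω)) ∂ℙ :=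
            integral_mono hEint (integrable_finset_sum _ fun j _ => hintj j) hptw
        _ = ∑ j, ((∫ ω, rexp (lam * V j ω) ∂ℙ) + ∫ ω, rexp (-lam * V j ω) ∂ℙ) := by
            rw [integral_finset_sum _ fun j _ => hintj j]
            exact Finset.sum_congr rfl fun j _ => integral_add (hexpint j lam) (hexpint j (-lam))
        _ ≤ ∑ _j : Fin p, (rexp (lam ^ 2 * τ ^ 2 / 2) + rexp (lam ^ 2 * τ ^ 2 / 2)) := by
            refine Finset.sum_le_sum fun j _ => add_le_add ?_ ?_
            · exact hVmgf j lam
            · have h := hVmgf j (-lam)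
              rwa [neg_sq] at h
        _ = 2 * (p:ℝ) * rexp (lam ^ 2 * τ ^ 2 / 2) := by
            rw [Finset.sum_const, Finset.card_univ, Fintype.card_fin, nsmul_eq_mul]
            ring
    have h3 : rexp (lam * ∫ ω, Z ω ∂ℙ) ≤ rexp (K + lam ^ 2 * τ ^ 2 / 2) := by
      refine hjensen.trans (h2.trans ?_)
      rw [Real.exp_add, hKdef, Real.exp_log (by positivity)]
    have h4 : lam * ∫ ω, Z ω ∂ℙ ≤ K + lam ^ 2 * τ ^ 2 / 2 := Real.exp_le_exp.1 h3
    have h5 : lam * ∫ ω, Z ω ∂ℙ ≤ 2 * K := by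
      rw [hlamsq] at h4; linarith
    have hs2K : (0:ℝ) < Real.sqrt (2 * K) := Real.sqrt_pos.2 (by linarith)
    have hs2Ksq : Real.sqrt (2 * K) ^ 2 = 2 * K := Real.sq_sqrt (by linarith)
    rw [hlamdef] at h5
    have h6 : Real.sqrt (2 * K) * ∫ ω, Z ω ∂ℙ ≤ 2 * K * τ := by
      have h7 := mul_le_mul_of_nonneg_right h5 hτpos.le
      rw [div_mul_eq_mul_div, div_mul_eq_mul_div, div_le_iff₀ hτpos] at h7
      nlinarith [h7]
    nlinarith [h6, hs2K, hs2Ksq, hτpos]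
  -- pointwise basic inequality
  have hbasic : ∀ ω, (∑ i ∈ S, ((∑ j, x i j * βs j) - ∑ j, x i j * βhat ω j) ^ 2)
      ≤ 2 * ((∑ j, βhat ω j * V j ω) - ∑ j, βs j * V j ω) := by
    intro ω
    have h1 := hβmin ω
    simp only [hy] at h1
    have h2 : ∑ i ∈ S, ((∑ j, x i j * βs j) + ε i ω - ∑ j, x i j * βs j) ^ 2
        = ∑ i ∈ S, ε i ω ^ 2 := by
      apply Finset.sum_congr rfl; intros; ring
    have h3 : ∑ i ∈ S, ((∑ j, x i j * βs j) + ε i ω - ∑ j, x i j * βhat ω j) ^ 2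
        = ∑ i ∈ S, ((∑ j, x i j * βs j) - ∑ j, x i j * βhat ω j) ^ 2
          + 2 * ∑ i ∈ S, (((∑ j, x i j * βs j) - ∑ j, x i j * βhat ω j) * ε i ω)
          + ∑ i ∈ S, ε i ω ^ 2 := by
      rw [Finset.mul_sum, ← Finset.sum_add_distrib, ← Finset.sum_add_distrib]
      apply Finset.sum_congr rfl; intros; ring
    have h4 : ∑ i ∈ S, (((∑ j, x i j * βs j) - ∑ j, x i j * βhat ω j) * ε i ω)
        = (∑ j, βs j * V j ω) - ∑ j, βhat ω j * V j ω := by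
      have h5 : ∀ i, ((∑ j, x i j * βs j) - ∑ j, x i j * βhat ω j) * ε i ω
          = ∑ j, (βs j * (x i j * ε i ω) - βhat ω j * (x i j * ε i ω)) := by
        intro i
        rw [sub_mul, Finset.sum_mul, Finset.sum_mul, ← Finset.sum_sub_distrib]
        apply Finset.sum_congr rfl; intros; ring
      rw [Finset.sum_congr rfl fun i _ => h5 i, Finset.sum_comm, ← Finset.sum_sub_distrib]
      apply Finset.sum_congr rfl
      intro j _
      rw [Finset.sum_sub_distrib, ← Finset.mul_sum, ← Finset.mul_sum]
    rw [h2, h3, h4] at h1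
    linarith
  -- integrability statements
  have hβsj : ∀ j, |βs j| ≤ L := fun j =>
    (Finset.single_le_sum (f := fun k => |βs k|) (fun k _ => abs_nonneg _)
      (Finset.mem_univ j)).trans hβs
  have hβhatj : ∀ ω j, |βhat ω j| ≤ L := fun ω j =>
    (Finset.single_le_sum (f := fun k => |βhat ω k|) (fun k _ => abs_nonneg _)
      (Finset.mem_univ j)).trans (hβL ω)
  have hb2 : ∀ ω i, |∑ j, x i j * βhat ω j| ≤ (∑ j, |x i j|) * L := by
    intro ω i
    calc |∑ j, x i j * βhat ω j| ≤ ∑ j, |x i j * βhat ω j| := Finset.abs_sum_le_sum_abs _ _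
      _ = ∑ j, |x i j| * |βhat ω j| := by simp [abs_mul]
      _ ≤ ∑ j, |x i j| * L := Finset.sum_le_sum fun j _ =>
          mul_le_mul_of_nonneg_left (hβhatj ω j) (abs_nonneg _)
      _ = (∑ j, |x i j|) * L := (Finset.sum_mul _ _ _).symm
  have hb1 : ∀ i, |∑ j, x i j * βs j| ≤ (∑ j, |x i j|) * L := by
    intro i
    calc |∑ j, x i j * βs j| ≤ ∑ j, |x i j * βs j| := Finset.abs_sum_le_sum_abs _ _
      _ = ∑ j, |x i j| * |βs j| := by simp [abs_mul]
      _ ≤ ∑ j, |x i j| * L := Finset.sum_le_sum fun j _ =>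
          mul_le_mul_of_nonneg_left (hβsj j) (abs_nonneg _)
      _ = (∑ j, |x i j|) * L := (Finset.sum_mul _ _ _).symm
  have hint1 : Integrable
      (fun ω => ∑ i ∈ S, ((∑ j, x i j * βs j) - ∑ j, x i j * βhat ω j) ^ 2) ℙ := by
    refine Integrable.mono' (g := fun _ => ∑ i ∈ S, (2 * ((∑ j, |x i j|) * L)) ^ 2)
      (integrable_const _) ?_ (Filter.Eventually.of_forall fun ω => ?_)
    · exact (Finset.measurable_sum S fun i _ =>
        ((measurable_const.sub (Finset.measurable_sum Finset.univ fun j _ =>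
          (hβj j).const_mul (x i j))).pow_const 2)).aestronglyMeasurable
    · rw [Real.norm_eq_abs, abs_of_nonneg (Finset.sum_nonneg fun i _ => sq_nonneg _)]
      refine Finset.sum_le_sum fun i _ => ?_
      have habs : |(∑ j, x i j * βs j) - ∑ j, x i j * βhat ω j| ≤ 2 * ((∑ j, |x i j|) * L) := by
        calc |(∑ j, x i j * βs j) - ∑ j, x i j * βhat ω j|
            ≤ |∑ j, x i j * βs j| + |∑ j, x i j * βhat ω j| := abs_sub _ _
          _ ≤ (∑ j, |x i j|) * L + (∑ j, |x i j|) * L := add_le_add (hb1 i) (hb2 ω i)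
          _ = 2 * ((∑ j, |x i j|) * L) := by ring
      calc ((∑ j, x i j * βs j) - ∑ j, x i j * βhat ω j) ^ 2
          = |(∑ j, x i j * βs j) - ∑ j, x i j * βhat ω j| ^ 2 := (sq_abs _).symm
        _ ≤ (2 * ((∑ j, |x i j|) * L)) ^ 2 := by
            apply pow_le_pow_left₀ (abs_nonneg _) habs
  have hint2 : Integrable (fun ω => ∑ j, βhat ω j * V j ω) ℙ := by
    refine Integrable.mono' (g := fun ω => ∑ j, L * |V j ω|)
      (integrable_finset_sum _ fun j _ => ((hVint j).abs.const_mul L)) ?_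
      (Filter.Eventually.of_forall fun ω => ?_)
    · exact (Finset.measurable_sum Finset.univ fun j _ =>
        (hβj j).mul (hVmeas j)).aestronglyMeasurable
    · rw [Real.norm_eq_abs]
      calc |∑ j, βhat ω j * V j ω| ≤ ∑ j, |βhat ω j * V j ω| := Finset.abs_sum_le_sum_abs _ _
        _ ≤ ∑ j, L * |V j ω| := by
            refine Finset.sum_le_sum fun j _ => ?_
            rw [abs_mul]
            exact mul_le_mul_of_nonneg_right (hβhatj ω j) (abs_nonneg _)
  have hint3 : Integrable (fun ω => ∑ j, βs j * V j ω) ℙ :=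
    integrable_finset_sum _ fun j _ => (hVint j).const_mul _
  have hmean3 : ∫ ω, ∑ j, βs j * V j ω ∂ℙ = 0 := by
    rw [integral_finset_sum _ fun j _ => (hVint j).const_mul _]
    exact Finset.sum_eq_zero fun j _ => by rw [integral_const_mul, hVmean, mul_zero]
  have hptw2 : ∀ ω, ∑ j, βhat ω j * V j ω ≤ L * Z ω := by
    intro ω
    calc ∑ j, βhat ω j * V j ω ≤ ∑ j, |βhat ω j| * Z ω := by
          refine Finset.sum_le_sum fun j _ => (le_abs_self _).trans ?_
          rw [abs_mul]
          exact mul_le_mul_of_nonneg_left (hZle j ω) (abs_nonneg _)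
      _ = (∑ j, |βhat ω j|) * Z ω := (Finset.sum_mul _ _ _).symm
      _ ≤ L * Z ω := mul_le_mul_of_nonneg_right (hβL ω) (hZ0 ω)
  -- putting everything together
  have main : ∫ ω, ∑ i ∈ S, ((∑ j, x i j * βs j) - ∑ j, x i j * βhat ω j) ^ 2 ∂ℙ
      ≤ 2 * L * (τ * Real.sqrt (2 * K)) := by
    have step1 : ∫ ω, ∑ i ∈ S, ((∑ j, x i j * βs j) - ∑ j, x i j * βhat ω j) ^ 2 ∂ℙ
        ≤ ∫ ω, 2 * ((∑ j, βhat ω j * V j ω) - ∑ j, βs j * V j ω) ∂ℙ :=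
      integral_mono hint1 ((hint2.sub hint3).const_mul 2) hbasic
    have step2 : ∫ ω, 2 * ((∑ j, βhat ω j * V j ω) - ∑ j, βs j * V j ω) ∂ℙ
        = 2 * ∫ ω, ∑ j, βhat ω j * V j ω ∂ℙ := by
      rw [integral_const_mul, integral_sub hint2 hint3, hmean3, sub_zero]
    have step3 : ∫ ω, ∑ j, βhat ω j * V j ω ∂ℙ ≤ L * ∫ ω, Z ω ∂ℙ := by
      have h := integral_mono hint2 (hZint.const_mul L) hptw2
      rwa [integral_const_mul] at h
    have step4 : L * ∫ ω, Z ω ∂ℙ ≤ L * (τ * Real.sqrt (2 * K)) :=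
      mul_le_mul_of_nonneg_left hmax hL.le
    calc ∫ ω, ∑ i ∈ S, ((∑ j, x i j * βs j) - ∑ j, x i j * βhat ω j) ^ 2 ∂ℙ
        ≤ 2 * ∫ ω, ∑ j, βhat ω j * V j ω ∂ℙ := step2 ▸ step1
      _ ≤ 2 * (L * (τ * Real.sqrt (2 * K))) := by linarith [step3, step4]
      _ = 2 * L * (τ * Real.sqrt (2 * K)) := by ring
  refine main.trans (le_of_eq ?_)
  rw [hτdef, hKdef]
  have hfin : Real.sqrt ((n:ℝ) * Real.sqrt M) * Real.sqrt (2 * Real.log (2 * (p:ℝ)))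
      = Real.sqrt (2 * Real.sqrt M * (n:ℝ) * Real.log (2 * (p:ℝ))) := by
    rw [← Real.sqrt_mul (by positivity)]
    congr 1
    ring
  calc 2 * L * (σ * Real.sqrt ((n:ℝ) * Real.sqrt M) * Real.sqrt (2 * Real.log (2 * (p:ℝ))))
      = 2 * L * σ * (Real.sqrt ((n:ℝ) * Real.sqrt M) * Real.sqrt (2 * Real.log (2 * (p:ℝ)))) := by
        ring
    _ = 2 * L * σ * Real.sqrt (2 * Real.sqrt M * (n:ℝ) * Real.log (2 * (p:ℝ))) := by rw [hfin]
end

section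
/- Let ε₁,…,εₙ be i.i.d. N(0,σ²), let y_i = μ_i + ε_i for fixed reals μ₁,…,μₙ, and let S ⊆ {1,…,n} be a fixed subset. With m := 16|S|σ² + 8 Σ_{i∈S} μ_i², one has P( 4 Σ_{i∈S} y_i² > m ) ≤ 2^{−|S|/2}. -/
open MeasureTheory ProbabilityTheory Real

lemma gauss_pointwise (σ c x : ℝ) (hσ : 0 < σ) :
    gaussianPDFReal 0 ⟨σ ^ 2, sq_nonneg σ⟩ x * rexp ((4 * σ ^ 2)⁻¹ * (c + x) ^ 2)
      = (√(2 * π * σ ^ 2))⁻¹ * rexp (c ^ 2 / (2 * σ ^ 2)) * rexp (-(4 * σ ^ 2)⁻¹ * (x - c) ^ 2) := by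
  have hσ2 : (0:ℝ) < σ ^ 2 := by positivity
  unfold gaussianPDFReal
  simp only [NNReal.coe_mk, sub_zero]
  change (√(2 * π * σ ^ 2))⁻¹ * rexp (-x ^ 2 / (2 * σ ^ 2)) * rexp ((4 * σ ^ 2)⁻¹ * (c + x) ^ 2) = _
  rw [mul_assoc, ← Real.exp_add,
    mul_assoc ((√(2 * π * σ ^ 2))⁻¹) (rexp (c ^ 2 / (2 * σ ^ 2))), ← Real.exp_add]
  congr 2
  field_simp
  ring

lemma gauss_integral (σ c : ℝ) (hσ : 0 < σ) :
    (∫ x, rexp ((4 * σ ^ 2)⁻¹ * (c + x) ^ 2) ∂(gaussianReal 0 ⟨σ ^ 2, sq_nonneg σ⟩))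
      = √2 * rexp (c ^ 2 / (2 * σ ^ 2)) ∧
    Integrable (fun x => rexp ((4 * σ ^ 2)⁻¹ * (c + x) ^ 2))
      (gaussianReal 0 ⟨σ ^ 2, sq_nonneg σ⟩) := by
  have hσ2 : (0:ℝ) < σ ^ 2 := by positivity
  have hv : (⟨σ ^ 2, sq_nonneg σ⟩ : NNReal) ≠ 0 := by
    simp [← NNReal.coe_ne_zero, hσ2.ne']
  have hb : (0:ℝ) < (4 * σ ^ 2)⁻¹ := by positivity
  set f : ℝ → NNReal := fun x => (gaussianPDFReal 0 ⟨σ ^ 2, sq_nonneg σ⟩ x).toNNReal with hf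
  have hfm : Measurable f := (measurable_gaussianPDFReal _ _).real_toNNReal
  have hd : gaussianReal 0 ⟨σ ^ 2, sq_nonneg σ⟩ = volume.withDensity (fun x => (f x : ENNReal)) := by
    rw [gaussianReal_of_var_ne_zero _ hv]
    rfl
  have hint0 : Integrable (fun x : ℝ => rexp (-(4 * σ ^ 2)⁻¹ * (x - c) ^ 2)) volume := by
    have := (integrable_exp_neg_mul_sq hb).comp_sub_right c
    simpa using this
  have hint : Integrable
      (fun x : ℝ => gaussianPDFReal 0 ⟨σ ^ 2, sq_nonneg σ⟩ x * rexp ((4 * σ ^ 2)⁻¹ * (c + x) ^ 2))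
      volume := by
    have : (fun x : ℝ => gaussianPDFReal 0 ⟨σ ^ 2, sq_nonneg σ⟩ x
        * rexp ((4 * σ ^ 2)⁻¹ * (c + x) ^ 2))
        = fun x => (√(2 * π * σ ^ 2))⁻¹ * rexp (c ^ 2 / (2 * σ ^ 2))
            * rexp (-(4 * σ ^ 2)⁻¹ * (x - c) ^ 2) := by
      ext x; exact gauss_pointwise σ c x hσ
    rw [this]
    exact hint0.const_mul _
  constructor
  · rw [hd, integral_withDensity_eq_integral_smul hfm]
    have heq : (fun x : ℝ => f x • rexp ((4 * σ ^ 2)⁻¹ * (c + x) ^ 2))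
        = fun x => (√(2 * π * σ ^ 2))⁻¹ * rexp (c ^ 2 / (2 * σ ^ 2))
            * rexp (-(4 * σ ^ 2)⁻¹ * (x - c) ^ 2) := by
      ext x
      rw [NNReal.smul_def, smul_eq_mul, hf]
      rw [← gauss_pointwise σ c x hσ]
      congr 1
      exact Real.coe_toNNReal _ (gaussianPDFReal_nonneg _ _ _)
    rw [heq, integral_const_mul]
    rw [integral_sub_right_eq_self (fun x : ℝ => rexp (-(4 * σ ^ 2)⁻¹ * x ^ 2)) c,
      integral_gaussian]
    have h1 : √(π / (4 * σ ^ 2)⁻¹) = √(2 * π * σ ^ 2) * √2 := by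
      rw [← Real.sqrt_mul (by positivity)]
      congr 1
      field_simp
      ring
    rw [h1]
    have hs : √(2 * π * σ ^ 2) ≠ 0 := by positivity
    field_simp
  · rw [hd, integrable_withDensity_iff_integrable_smul hfm]
    have : (fun x : ℝ => f x • rexp ((4 * σ ^ 2)⁻¹ * (c + x) ^ 2))
        = fun x => gaussianPDFReal 0 ⟨σ ^ 2, sq_nonneg σ⟩ x * rexp ((4 * σ ^ 2)⁻¹ * (c + x) ^ 2) := by
      ext x
      rw [NNReal.smul_def, smul_eq_mul, hf]
      congr 1
      exact Real.coe_toNNReal _ (gaussianPDFReal_nonneg _ _ _)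
    rw [this]
    exact hint

/-- For i.i.d. `εᵢ ~ N(0,σ²)`, `yᵢ = μᵢ + εᵢ`, a fixed `S ⊆ {1,…,n}` and
`m = 16|S|σ² + 8 Σ_{i∈S} μᵢ²`, one has `P(4 Σ_{i∈S} yᵢ² > m) ≤ 2^{−|S|/2}`. -/
theorem stmt15 {Ω : Type*} [MeasureSpace Ω] [IsProbabilityMeasure (ℙ : Measure Ω)]
    (n : ℕ) (μs : Fin n → ℝ) (σ : ℝ) (hσ : 0 < σ)
    (ε : Fin n → Ω → ℝ)
    (hmeas : ∀ i, Measurable (ε i))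
    (hindep : iIndepFun ε ℙ)
    (hgauss : ∀ i, Measure.map (ε i) ℙ = gaussianReal 0 ⟨σ ^ 2, sq_nonneg σ⟩)
    (y : Fin n → Ω → ℝ) (hy : ∀ i ω, y i ω = μs i + ε i ω)
    (S : Finset (Fin n))
    (m : ℝ) (hm : m = 16 * S.card * σ ^ 2 + 8 * ∑ i ∈ S, (μs i) ^ 2) :
    (ℙ {ω | m < 4 * ∑ i ∈ S, (y i ω) ^ 2}).toReal ≤ (2 : ℝ) ^ (-(S.card : ℝ) / 2) := by
  have hσ2 : (0:ℝ) < σ ^ 2 := by positivity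
  set t : ℝ := (4 * σ ^ 2)⁻¹ with ht_def
  have ht : 0 < t := by positivity
  set X : Fin n → Ω → ℝ := fun i ω => (μs i + ε i ω) ^ 2 with hX
  have hXmeas : ∀ i, Measurable (X i) := fun i => ((measurable_const.add (hmeas i)).pow_const 2)
  have hXindep : iIndepFun X ℙ := by
    have := hindep.comp (fun i (x : ℝ) => (μs i + x) ^ 2)
      (fun i => (measurable_const.add measurable_id).pow_const 2)
    exact this
  have hg_meas : ∀ c : ℝ, Measurable fun x : ℝ => rexp ((4 * σ ^ 2)⁻¹ * (c + x) ^ 2) := by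
    intro c; fun_prop
  have h_int : ∀ i, Integrable (fun ω => rexp (t * X i ω)) ℙ := by
    intro i
    have h1 : Integrable (fun x => rexp ((4 * σ ^ 2)⁻¹ * (μs i + x) ^ 2))
        (Measure.map (ε i) ℙ) := by
      rw [hgauss i]; exact (gauss_integral σ (μs i) hσ).2
    have h2 := (integrable_map_measure ((hg_meas (μs i)).aestronglyMeasurable)
      (hmeas i).aemeasurable).mp h1
    simpa [Function.comp_def, hX, ht_def] using h2
  have h_mgf : ∀ i, mgf (X i) ℙ t = √2 * rexp ((μs i) ^ 2 / (2 * σ ^ 2)) := by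
    intro i
    have h1 := integral_map (hmeas i).aemeasurable
      ((hg_meas (μs i)).aestronglyMeasurable
        (μ := Measure.map (ε i) ℙ))
    rw [hgauss i] at h1
    have h2 := (gauss_integral σ (μs i) hσ).1
    unfold mgf
    rw [show (fun ω => rexp (t * X i ω)) = fun ω => rexp ((4 * σ ^ 2)⁻¹ * (μs i + ε i ω) ^ 2)
      from rfl]
    rw [← h1, h2]
  have hIntSum : Integrable (fun ω => rexp (t * (∑ i ∈ S, X i) ω)) ℙ :=
    hXindep.integrable_exp_mul_sum hXmeas (fun i _ => h_int i)
  have key := measure_ge_le_exp_mul_mgf (X := ∑ i ∈ S, X i) (μ := ℙ) (m / 4) ht.le hIntSum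
  have hsub : {ω | m < 4 * ∑ i ∈ S, (y i ω) ^ 2} ⊆ {ω | m / 4 ≤ (∑ i ∈ S, X i) ω} := by
    intro ω hω
    simp only [Set.mem_setOf_eq, Finset.sum_apply] at *
    have hsum : ∑ i ∈ S, (y i ω) ^ 2 = ∑ i ∈ S, X i ω :=
      Finset.sum_congr rfl fun i _ => by rw [hy]
    linarith
  have hmono : (ℙ {ω | m < 4 * ∑ i ∈ S, (y i ω) ^ 2}).toReal
      ≤ (ℙ {ω | m / 4 ≤ (∑ i ∈ S, X i) ω}).toReal :=
    ENNReal.toReal_mono (measure_ne_top _ _) (measure_mono hsub)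
  have hprod : mgf (∑ i ∈ S, X i) ℙ t
      = (√2) ^ S.card * rexp (∑ i ∈ S, (μs i) ^ 2 / (2 * σ ^ 2)) := by
    rw [hXindep.mgf_sum hXmeas S]
    rw [Finset.prod_congr rfl fun i _ => h_mgf i, Finset.prod_mul_distrib, Finset.prod_const,
      ← Real.exp_sum]
  set k : ℝ := (S.card : ℝ) with hk
  set A : ℝ := ∑ i ∈ S, (μs i) ^ 2 with hA
  have hsumdiv : ∑ i ∈ S, (μs i) ^ 2 / (2 * σ ^ 2) = A / (2 * σ ^ 2) := by
    rw [hA, Finset.sum_div]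
  have hexp : -t * (m / 4) = -k - A / (2 * σ ^ 2) := by
    rw [hm, ht_def, hk, hA]
    field_simp
    ring
  have hval : rexp (-t * (m / 4)) * mgf (∑ i ∈ S, X i) ℙ t = rexp (-k) * (√2) ^ S.card := by
    rw [hprod, hsumdiv, hexp]
    calc rexp (-k - A / (2 * σ ^ 2)) * ((√2) ^ S.card * rexp (A / (2 * σ ^ 2)))
        = (rexp (-k - A / (2 * σ ^ 2)) * rexp (A / (2 * σ ^ 2))) * (√2) ^ S.card := by ring
      _ = rexp (-k) * (√2) ^ S.card := by rw [← Real.exp_add]; congr 2; ring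
  have hfin : rexp (-k) * (√2) ^ S.card ≤ (2:ℝ) ^ (-(k) / 2) := by
    have h2 : ((√2:ℝ)) ^ S.card = (2:ℝ) ^ (k / 2) := by
      rw [Real.sqrt_eq_rpow, ← Real.rpow_natCast ((2:ℝ) ^ ((1:ℝ)/2)),
        ← Real.rpow_mul (by norm_num), hk]
      congr 1
      ring
    rw [h2]
    have hsplit : (2:ℝ) ^ (-k / 2) = (2:ℝ) ^ (-k) * (2:ℝ) ^ (k / 2) := by
      rw [← Real.rpow_add two_pos]
      congr 1
      ring
    rw [hsplit]
    apply mul_le_mul_of_nonneg_right _ (by positivity)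
    rw [Real.rpow_def_of_pos two_pos]
    apply Real.exp_le_exp.mpr
    have hk0 : 0 ≤ k := by rw [hk]; positivity
    nlinarith [Real.log_two_lt_d9, Real.log_two_gt_d9]
  calc (ℙ {ω | m < 4 * ∑ i ∈ S, (y i ω) ^ 2}).toReal
      ≤ (ℙ {ω | m / 4 ≤ (∑ i ∈ S, X i) ω}).toReal := hmono
    _ ≤ rexp (-t * (m / 4)) * mgf (∑ i ∈ S, X i) ℙ t := key
    _ = rexp (-k) * (√2) ^ S.card := hval
    _ ≤ (2:ℝ) ^ (-(k) / 2) := hfin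
end

section
/- Let ε₁,…,εₙ be i.i.d. N(0,σ²), let y_i = μ_i + ε_i for fixed reals μ₁,…,μₙ, and let I be a random subset of {1,…,n} formed by including each index independently with probability 1/2, independent of ε. With m := 16|I|σ² + 8 Σ_{i∈I} μ_i², one has P( 4 Σ_{i∈I} y_i² > m ) ≤ ((1 + 2^{−1/2})/2)^n. -/
open MeasureTheory ProbabilityTheory Real

lemma gauss_aux {σ : ℝ} (hσ : 0 < σ) (c : ℝ) :
    Integrable (fun x => rexp ((4 * σ ^ 2)⁻¹ * (c + x) ^ 2))
        (gaussianReal 0 ⟨σ ^ 2, sq_nonneg σ⟩) ∧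
    ∫ x, rexp ((4 * σ ^ 2)⁻¹ * (c + x) ^ 2) ∂(gaussianReal 0 ⟨σ ^ 2, sq_nonneg σ⟩)
      = Real.sqrt 2 * rexp ((2 * σ ^ 2)⁻¹ * c ^ 2) := by
  have hσ2 : (0:ℝ) < σ ^ 2 := by positivity
  set v : NNReal := ⟨σ ^ 2, sq_nonneg σ⟩ with hvdef
  have hv : v ≠ 0 := by
    intro h
    have : (v : ℝ) = 0 := by rw [h]; simp
    exact hσ2.ne' this
  have hvr : (v : ℝ) = σ ^ 2 := rfl
  have hmeas : Measurable fun x => (gaussianPDFReal 0 v x).toNNReal :=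
    (measurable_gaussianPDFReal 0 v).real_toNNReal
  have hgr : gaussianReal 0 v = volume.withDensity (fun x => ((gaussianPDFReal 0 v x).toNNReal : ENNReal)) := by
    rw [gaussianReal_of_var_ne_zero 0 hv]
    rfl
  set K : ℝ := (Real.sqrt (2 * (π * σ^2)))⁻¹ * rexp ((2 * σ ^ 2)⁻¹ * c ^ 2) with hK
  -- pointwise identity
  have key : ∀ x : ℝ, gaussianPDFReal 0 v x * rexp ((4 * σ ^ 2)⁻¹ * (c + x) ^ 2)
      = K * rexp (-(4 * σ ^ 2)⁻¹ * (x - c) ^ 2) := by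
    intro x
    rw [gaussianPDFReal, hvr]
    have hexp : -(x - 0)^2/(2*σ^2) + (4*σ^2)⁻¹*(c+x)^2
        = (2*σ^2)⁻¹*c^2 + (-(4*σ^2)⁻¹*(x-c)^2) := by
      field_simp
      ring
    rw [mul_assoc, ← Real.exp_add, hexp, Real.exp_add, hK]
    ring_nf
  have keysmul : ∀ x : ℝ, (gaussianPDFReal 0 v x).toNNReal • rexp ((4 * σ ^ 2)⁻¹ * (c + x) ^ 2)
      = K * rexp (-(4 * σ ^ 2)⁻¹ * (x - c) ^ 2) := by
    intro x
    rw [NNReal.smul_def, Real.coe_toNNReal _ (gaussianPDFReal_nonneg 0 v x), smul_eq_mul, key x]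
  have hb : (0:ℝ) < (4 * σ ^ 2)⁻¹ := by positivity
  have hint2 : Integrable (fun x : ℝ => K * rexp (-(4 * σ ^ 2)⁻¹ * (x - c) ^ 2)) volume :=
    ((integrable_exp_neg_mul_sq hb).comp_sub_right c).const_mul K
  have hint : Integrable (fun x => rexp ((4 * σ ^ 2)⁻¹ * (c + x) ^ 2))
      (gaussianReal 0 v) := by
    rw [hgr, integrable_withDensity_iff_integrable_smul hmeas]
    exact hint2.congr (Filter.Eventually.of_forall fun x => (keysmul x).symm)
  refine ⟨hint, ?_⟩
  rw [hgr, integral_withDensity_eq_integral_smul hmeas]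
  simp_rw [keysmul]
  rw [integral_const_mul]
  have hshift : ∫ x : ℝ, rexp (-(4 * σ ^ 2)⁻¹ * (x - c) ^ 2)
      = ∫ x : ℝ, rexp (-(4 * σ ^ 2)⁻¹ * x ^ 2) :=
    integral_sub_right_eq_self (fun y => rexp (-(4 * σ ^ 2)⁻¹ * y ^ 2)) c
  rw [hshift, integral_gaussian]
  have h1 : Real.sqrt (2 * (π * σ ^ 2)) = Real.sqrt 2 * Real.sqrt π * σ := by
    rw [Real.sqrt_mul (by norm_num), Real.sqrt_mul pi_nonneg, Real.sqrt_sq hσ.le, mul_assoc]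
  have h2 : Real.sqrt (π / (4 * σ ^ 2)⁻¹) = Real.sqrt π * (2 * σ) := by
    rw [div_eq_mul_inv, inv_inv, Real.sqrt_mul pi_nonneg]
    congr 1
    rw [show (4:ℝ) * σ ^ 2 = (2*σ)^2 by ring, Real.sqrt_sq (by positivity)]
  have hs2 : Real.sqrt 2 ≠ 0 := by positivity
  have hsp : Real.sqrt π ≠ 0 := by positivity
  have h22 : Real.sqrt 2 * Real.sqrt 2 = 2 := Real.mul_self_sqrt (by norm_num)
  have hmain : (Real.sqrt (2 * (π * σ ^ 2)))⁻¹ * Real.sqrt (π / (4 * σ ^ 2)⁻¹) = Real.sqrt 2 := by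
    have hprod : Real.sqrt 2 * (Real.sqrt 2 * Real.sqrt π * σ) = Real.sqrt π * (2 * σ) := by
      linear_combination (Real.sqrt π * σ) * h22
    have hne : Real.sqrt 2 * Real.sqrt π * σ ≠ 0 := by positivity
    rw [h1, h2, ← hprod, mul_comm (Real.sqrt 2) (Real.sqrt 2 * Real.sqrt π * σ), ← mul_assoc,
      inv_mul_cancel₀ hne, one_mul]
  calc K * Real.sqrt (π / (4 * σ ^ 2)⁻¹)
      = ((Real.sqrt (2 * (π * σ ^ 2)))⁻¹ * Real.sqrt (π / (4 * σ ^ 2)⁻¹))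
        * rexp ((2 * σ ^ 2)⁻¹ * c ^ 2) := by rw [hK]; ring
    _ = Real.sqrt 2 * rexp ((2 * σ ^ 2)⁻¹ * c ^ 2) := by rw [hmain]

lemma iIndepFun_precomp_of_injective {Ω ι κ β : Type*} {mΩ : MeasurableSpace Ω}
    [mβ : MeasurableSpace β] {μ : Measure Ω} {f : ι → Ω → β}
    (h : iIndepFun f μ) {g : κ → ι} (hg : Function.Injective g) :
    iIndepFun (fun j => f (g j)) μ := by
  classical
  rw [iIndepFun_iff_measure_inter_preimage_eq_mul] at h ⊢
  intro S sets hsets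
  set sets' : ι → Set β := fun i =>
    if hi : ∃ j, g j = i then sets hi.choose else Set.univ with hsets'def
  have hkey : ∀ j : κ, sets' (g j) = sets j := by
    intro j
    have hex : ∃ j', g j' = g j := ⟨j, rfl⟩
    have : hex.choose = j := hg hex.choose_spec
    simp only [hsets'def, dif_pos hex, this]
  have h' := h (S.image g) (sets := sets') ?_
  · have hInter : (⋂ i ∈ S.image g, f i ⁻¹' sets' i) = ⋂ j ∈ S, f (g j) ⁻¹' sets j := by
      ext ω
      simp only [Set.mem_iInter, Finset.mem_image]
      constructor
      · intro hw j hj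
        have := hw (g j) ⟨j, hj, rfl⟩
        rwa [hkey j] at this
      · rintro hw i ⟨j, hj, rfl⟩
        rw [hkey j]
        exact hw j hj
    have hProd : ∏ i ∈ S.image g, μ (f i ⁻¹' sets' i) = ∏ j ∈ S, μ (f (g j) ⁻¹' sets j) := by
      rw [Finset.prod_image (fun j _ j' _ e => hg e)]
      exact Finset.prod_congr rfl fun j _ => by rw [hkey j]
    rw [← hInter, ← hProd]
    exact h'
  · intro i hi
    obtain ⟨j, hj, rfl⟩ := Finset.mem_image.mp hi
    rw [hkey j]
    exact hsets j hj

/-- For i.i.d. `εᵢ ~ N(0,σ²)`, `yᵢ = μᵢ + εᵢ`, and a uniformly random subset `I` of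
`{1,…,n}` (each index included independently with probability 1/2, independently of `ε`),
with `m = 16|I|σ² + 8 Σ_{i∈I} μᵢ²` one has `P(4 Σ_{i∈I} yᵢ² > m) ≤ ((1+2^{−1/2})/2)^n`. -/
theorem stmt16 {Ω : Type*} [MeasureSpace Ω] [IsProbabilityMeasure (ℙ : Measure Ω)]
    (n : ℕ) (μs : Fin n → ℝ) (σ : ℝ) (hσ : 0 < σ)
    (ε : Fin n → Ω → ℝ)
    (hmeas : ∀ i, Measurable (ε i))
    (I : Ω → Finset (Fin n))
    (hImeas : ∀ i, MeasurableSet {ω | i ∈ I ω})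
    (hindep : iIndepFun
      (Sum.elim ε (fun i ω => if i ∈ I ω then (1 : ℝ) else 0)) ℙ)
    (hgauss : ∀ i, Measure.map (ε i) ℙ = gaussianReal 0 ⟨σ ^ 2, sq_nonneg σ⟩)
    (hI : ∀ i, ℙ {ω | i ∈ I ω} = 1 / 2)
    (y : Fin n → Ω → ℝ) (hy : ∀ i ω, y i ω = μs i + ε i ω) :
    (ℙ {ω | 16 * (I ω).card * σ ^ 2 + 8 * ∑ i ∈ I ω, (μs i) ^ 2
          < 4 * ∑ i ∈ I ω, (y i ω) ^ 2}).toReal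
      ≤ ((1 + (2 : ℝ) ^ (-(1 : ℝ) / 2)) / 2) ^ n := by
  classical
  have hσ2 : (0:ℝ) < σ ^ 2 := by positivity
  set t : ℝ := (4 * σ ^ 2)⁻¹ with ht
  have ht0 : 0 ≤ t := by positivity
  set χ : Fin n → Ω → ℝ := fun i ω => if i ∈ I ω then 1 else 0 with hχ
  have hχmeas : ∀ i, Measurable (χ i) := fun i =>
    Measurable.ite (hImeas i) measurable_const measurable_const
  have hfmeas : ∀ s : Fin n ⊕ Fin n, Measurable (Sum.elim ε χ s) := by
    rintro (i | i)
    exacts [hmeas i, hχmeas i]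
  set W : Fin n → Ω → ℝ := fun i ω => (μs i + ε i ω) ^ 2 with hW
  have hWmeas : ∀ i, Measurable (W i) := fun i =>
    (measurable_const.add (hmeas i)).pow_const 2
  have hεindep : iIndepFun ε ℙ :=
    iIndepFun_precomp_of_injective hindep Sum.inl_injective
  have hχindep : iIndepFun χ ℙ :=
    iIndepFun_precomp_of_injective hindep Sum.inr_injective
  have hWindep : iIndepFun W ℙ :=
    hεindep.comp (fun i x => (μs i + x) ^ 2)
      (fun i => (measurable_const.add measurable_id).pow_const 2)
  -- per-index integrability and mgf
  have hWint : ∀ i, Integrable (fun ω => rexp (t * W i ω)) ℙ := by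
    intro i
    have hg : Measurable fun x : ℝ => rexp ((4 * σ ^ 2)⁻¹ * (μs i + x) ^ 2) :=
      ((measurable_const.add measurable_id).pow_const 2).const_mul _ |>.exp
    have := (integrable_map_measure hg.aestronglyMeasurable (hmeas i).aemeasurable).mp
      (by rw [hgauss i]; exact (gauss_aux hσ (μs i)).1)
    simpa [ht, hW, Function.comp_def] using this
  have hWmgf : ∀ i, mgf (W i) ℙ t
      = Real.sqrt 2 * rexp ((2 * σ ^ 2)⁻¹ * (μs i) ^ 2) := by
    intro i
    have hg : Measurable fun x : ℝ => rexp ((4 * σ ^ 2)⁻¹ * (μs i + x) ^ 2) :=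
      ((measurable_const.add measurable_id).pow_const 2).const_mul _ |>.exp
    have hmap : ∫ x, rexp ((4 * σ ^ 2)⁻¹ * (μs i + x) ^ 2) ∂(Measure.map (ε i) ℙ)
        = ∫ ω, rexp ((4 * σ ^ 2)⁻¹ * (μs i + ε i ω) ^ 2) ∂ℙ :=
      integral_map (hmeas i).aemeasurable hg.aestronglyMeasurable
    have hval := (gauss_aux hσ (μs i)).2
    rw [hgauss i] at hmap
    rw [mgf]
    simp only [hW, ht]
    rw [← hmap, hval]
  set r : ℝ := Real.sqrt 2 * rexp (-1) with hr
  have hr0 : 0 ≤ r := by positivity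
  -- Chernoff bound for each fixed S
  have hA : ∀ S : Finset (Fin n),
      (ℙ {ω | (4 * S.card * σ ^ 2 + 2 * ∑ i ∈ S, (μs i) ^ 2 : ℝ)
            ≤ ∑ i ∈ S, W i ω}).toReal ≤ r ^ S.card := by
    intro S
    set cS : ℝ := 4 * S.card * σ ^ 2 + 2 * ∑ i ∈ S, (μs i) ^ 2 with hcS
    have hint : Integrable (fun ω => rexp (t * (∑ i ∈ S, W i) ω)) ℙ :=
      hWindep.integrable_exp_mul_sum hWmeas (fun i _ => hWint i)
    have hch := measure_ge_le_exp_mul_mgf (X := ∑ i ∈ S, W i) (μ := ℙ) cS ht0 hint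
    have hset : {ω | cS ≤ (∑ i ∈ S, W i) ω} = {ω | cS ≤ ∑ i ∈ S, W i ω} := by
      ext ω; simp [Finset.sum_apply]
    rw [hset] at hch
    refine hch.trans ?_
    rw [hWindep.mgf_sum hWmeas]
    have hexp : -t * cS = ∑ i ∈ S, (-1 - (2 * σ ^ 2)⁻¹ * (μs i) ^ 2) := by
      rw [Finset.sum_sub_distrib, Finset.sum_const, ← Finset.mul_sum, hcS, ht]
      field_simp
      ring
    rw [hexp, Real.exp_sum]
    have : ∀ i ∈ S, mgf (W i) ℙ t = Real.sqrt 2 * rexp ((2 * σ ^ 2)⁻¹ * (μs i) ^ 2) :=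
      fun i _ => hWmgf i
    rw [Finset.prod_congr rfl this, ← Finset.prod_mul_distrib]
    have hfac : ∀ i ∈ S, rexp (-1 - (2 * σ ^ 2)⁻¹ * (μs i) ^ 2)
        * (Real.sqrt 2 * rexp ((2 * σ ^ 2)⁻¹ * (μs i) ^ 2)) = r := by
      intro i _
      have hsum : (-1 - (2 * σ ^ 2)⁻¹ * (μs i) ^ 2) + (2 * σ ^ 2)⁻¹ * (μs i) ^ 2 = -1 := by
        ring
      rw [hr, mul_left_comm, ← Real.exp_add, hsum]
    rw [Finset.prod_congr rfl hfac, Finset.prod_const]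
  -- events and tuples
  set vS : Finset (Fin n) → Fin n → ℝ := fun S i => if i ∈ S then 1 else 0 with hvS
  set SA : Finset (Fin n) → Set (Fin n → ℝ) := fun S =>
    {v | (16 * S.card * σ ^ 2 + 8 * ∑ i ∈ S, (μs i) ^ 2 : ℝ)
      < 4 * ∑ i ∈ S, (μs i + v i) ^ 2} with hSA
  set SB : Finset (Fin n) → Set (Fin n → ℝ) := fun S => {v | ∀ i, v i = vS S i} with hSB
  set εT : Ω → Fin n → ℝ := fun ω i => ε i ω with hεT
  set χT : Ω → Fin n → ℝ := fun ω i => χ i ω with hχT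
  have hSAmeas : ∀ S, MeasurableSet (SA S) := by
    intro S
    apply measurableSet_lt measurable_const
    exact (Finset.measurable_sum _ fun i _ =>
      ((measurable_const.add (measurable_pi_apply i)).pow_const 2)).const_mul 4
  have hSBmeas : ∀ S, MeasurableSet (SB S) := by
    intro S
    have : SB S = ⋂ i, (fun v : Fin n → ℝ => v i) ⁻¹' {vS S i} := by
      ext v; simp [hSB]
    rw [this]
    exact MeasurableSet.iInter fun i => (measurable_pi_apply i) (measurableSet_singleton _)
  -- independence of the two tuples
  have hTindep : IndepFun εT χT ℙ := by
    set embL : Fin n ↪ (Fin n ⊕ Fin n) := ⟨Sum.inl, Sum.inl_injective⟩ with hembL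
    set embR : Fin n ↪ (Fin n ⊕ Fin n) := ⟨Sum.inr, Sum.inr_injective⟩ with hembR
    have hdisj : Disjoint (Finset.univ.map embL) (Finset.univ.map embR) := by
      rw [Finset.disjoint_left]
      rintro a ha hb
      simp only [Finset.mem_map, Finset.mem_univ, true_and, hembL, hembR,
        Function.Embedding.coeFn_mk] at ha hb
      obtain ⟨i, rfl⟩ := ha
      obtain ⟨j, hj⟩ := hb
      exact Sum.inl_ne_inr hj.symm
    have hbase := hindep.indepFun_finset (Finset.univ.map embL) (Finset.univ.map embR)
      hdisj hfmeas
    have hmemL : ∀ i : Fin n, Sum.inl i ∈ Finset.univ.map embL := by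
      intro i; simp [hembL]
    have hmemR : ∀ i : Fin n, Sum.inr i ∈ Finset.univ.map embR := by
      intro i; simp [hembR]
    have hcomp := hbase.comp
      (φ := fun v (i : Fin n) => v ⟨Sum.inl i, hmemL i⟩)
      (ψ := fun v (i : Fin n) => v ⟨Sum.inr i, hmemR i⟩)
      (measurable_pi_lambda _ fun i => measurable_pi_apply _)
      (measurable_pi_lambda _ fun i => measurable_pi_apply _)
    exact hcomp
  have hfactor : ∀ S : Finset (Fin n),
      ℙ (χT ⁻¹' SB S ∩ εT ⁻¹' SA S) = ℙ (χT ⁻¹' SB S) * ℙ (εT ⁻¹' SA S) :=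
    fun S => hTindep.symm.measure_inter_preimage_eq_mul _ _ (hSBmeas S) (hSAmeas S)
  -- probability of B
  have hhalf : ∀ (i : Fin n) (S : Finset (Fin n)), ℙ (χ i ⁻¹' {vS S i}) = 1 / 2 := by
    intro i S
    by_cases hiS : i ∈ S
    · have : χ i ⁻¹' {vS S i} = {ω | i ∈ I ω} := by
        ext ω
        simp only [hχ, hvS, Set.mem_preimage, Set.mem_singleton_iff, Set.mem_setOf_eq,
          if_pos hiS]
        by_cases h : i ∈ I ω <;> simp [h]
      rw [this, hI i]
    · have : χ i ⁻¹' {vS S i} = {ω | i ∈ I ω}ᶜ := by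
        ext ω
        simp only [hχ, hvS, Set.mem_preimage, Set.mem_singleton_iff, Set.mem_compl_iff,
          Set.mem_setOf_eq, if_neg hiS]
        by_cases h : i ∈ I ω <;> simp [h]
      rw [this, prob_compl_eq_one_sub (hImeas i), hI i]
      rw [one_div, ENNReal.one_sub_inv_two]
  have hB : ∀ S : Finset (Fin n), ℙ (χT ⁻¹' SB S) = (1 / 2 : ENNReal) ^ n := by
    intro S
    have hBeq : χT ⁻¹' SB S = ⋂ i, χ i ⁻¹' {vS S i} := by
      ext ω
      simp [hSB, hχT, Set.mem_iInter]
    rw [hBeq, hχindep.meas_iInter fun i => ⟨{vS S i}, measurableSet_singleton _, rfl⟩]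
    rw [Finset.prod_congr rfl fun i _ => hhalf i S, Finset.prod_const, Finset.card_univ,
      Fintype.card_fin]
  -- union bound
  have hsub : {ω | 16 * (I ω).card * σ ^ 2 + 8 * ∑ i ∈ I ω, (μs i) ^ 2
        < 4 * ∑ i ∈ I ω, (y i ω) ^ 2}
      ⊆ ⋃ S : Finset (Fin n), (χT ⁻¹' SB S ∩ εT ⁻¹' SA S) := by
    intro ω hω
    refine Set.mem_iUnion.2 ⟨I ω, ⟨fun i => rfl, ?_⟩⟩
    simp only [hSA, hεT, Set.mem_preimage, Set.mem_setOf_eq]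
    simp only [Set.mem_setOf_eq] at hω
    have : ∀ i ∈ I ω, (y i ω) ^ 2 = (μs i + ε i ω) ^ 2 := fun i _ => by rw [hy]
    rwa [Finset.sum_congr rfl this] at hω
  -- A bound in terms of SA
  have hAbound : ∀ S : Finset (Fin n), (ℙ (εT ⁻¹' SA S)).toReal ≤ r ^ S.card := by
    intro S
    refine le_trans ?_ (hA S)
    apply ENNReal.toReal_mono (measure_ne_top _ _)
    apply measure_mono
    intro ω hω
    simp only [hSA, hεT, Set.mem_preimage, Set.mem_setOf_eq] at hω
    simp only [Set.mem_setOf_eq, hW]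
    nlinarith [hω]
  -- put it together
  have huni : ℙ {ω | 16 * (I ω).card * σ ^ 2 + 8 * ∑ i ∈ I ω, (μs i) ^ 2
        < 4 * ∑ i ∈ I ω, (y i ω) ^ 2}
      ≤ ∑ S : Finset (Fin n), ℙ (χT ⁻¹' SB S ∩ εT ⁻¹' SA S) := by
    refine (measure_mono hsub).trans ?_
    refine (measure_iUnion_le _).trans_eq ?_
    exact tsum_fintype _
  have hsumne : (∑ S : Finset (Fin n), ℙ (χT ⁻¹' SB S ∩ εT ⁻¹' SA S)) ≠ ⊤ := by
    refine ne_of_lt (ENNReal.sum_lt_top.mpr fun S _ => measure_lt_top _ _)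
  have step1 : (ℙ {ω | 16 * (I ω).card * σ ^ 2 + 8 * ∑ i ∈ I ω, (μs i) ^ 2
        < 4 * ∑ i ∈ I ω, (y i ω) ^ 2}).toReal
      ≤ ∑ S : Finset (Fin n), ((1:ℝ) / 2) ^ n * r ^ S.card := by
    refine (ENNReal.toReal_mono hsumne huni).trans ?_
    rw [ENNReal.toReal_sum fun S _ => measure_ne_top _ _]
    refine Finset.sum_le_sum fun S _ => ?_
    rw [hfactor S, ENNReal.toReal_mul, hB S, ENNReal.toReal_pow]
    have h12 : ((1:ENNReal)/2).toReal = (1:ℝ)/2 := by norm_num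
    rw [h12]
    exact mul_le_mul_of_nonneg_left (hAbound S) (by positivity)
  refine step1.trans ?_
  -- final arithmetic
  have hsumS : ∑ S : Finset (Fin n), r ^ S.card = (r + 1) ^ n := by
    have h := Finset.prod_add (fun _ : Fin n => r) (fun _ : Fin n => 1) Finset.univ
    simp only [Finset.prod_const, Finset.prod_const_one, one_pow, mul_one, Finset.card_univ,
      Fintype.card_fin, Finset.powerset_univ] at h
    exact h.symm
  rw [← Finset.mul_sum, hsumS]
  have hq : ((2:ℝ) ^ (-(1:ℝ)/2)) = (Real.sqrt 2)⁻¹ := by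
    rw [show (-(1:ℝ)/2) = -(1/2) by ring, Real.rpow_neg (by norm_num : (0:ℝ) ≤ 2),
      ← Real.sqrt_eq_rpow]
  have h22 : Real.sqrt 2 * Real.sqrt 2 = 2 := Real.mul_self_sqrt (by norm_num)
  have h2e : (2:ℝ) ≤ rexp 1 := by
    have := Real.add_one_le_exp 1
    linarith
  have hmulexp : rexp (-1) * rexp 1 = 1 := by
    rw [← Real.exp_add]
    norm_num
  have hexp1 : rexp (-1) ≤ 1/2 := by
    nlinarith [Real.exp_pos (-1)]
  have hinv : (Real.sqrt 2)⁻¹ = Real.sqrt 2 / 2 := by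
    rw [eq_div_iff (by norm_num : (2:ℝ) ≠ 0), inv_mul_eq_iff_eq_mul₀ (by positivity)]
    linarith [h22]
  have hrq : r ≤ (2:ℝ) ^ (-(1:ℝ)/2) := by
    rw [hq, hinv, hr]
    nlinarith [Real.sqrt_nonneg 2, hexp1]
  have hfin : ((1:ℝ)/2) ^ n * (r + 1) ^ n = ((r + 1)/2) ^ n := by
    rw [← mul_pow]
    congr 1
    ring
  rw [hfin]
  refine pow_le_pow_left₀ (by positivity) ?_ n
  linarith [hrq]
end

section
/- Let β̂ be a random vector in ℝ^p, measurable with respect to ε, such that |β̂|₁ ≤ L and ‖Y − Xβ̂‖² ≤ ‖Y − Xβ*‖², where Y = Xβ* + ε. If |β*|₁ ≤ L, then E( ‖Xβ* − Xβ̂‖² ) ≤ 4Lσ (2n M^{1/2} log(2p))^{1/2}. In particular this bound holds for any measurable minimizer β̂^{(L)} of ‖Y − Xβ‖ subject to |β|₁ ≤ L. -/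
open MeasureTheory ProbabilityTheory Real

open NNReal ENNReal


lemma gauss_pdf_mul (v : ℝ≥0) (hv : v ≠ 0) (c x : ℝ) :
    gaussianPDFReal 0 v x * rexp (c * x)
      = rexp ((v:ℝ) * c ^ 2 / 2) * ((Real.sqrt (2 * π * v))⁻¹ * rexp (-(x - v*c)^2 / (2*(v:ℝ)))) := by
  have hv' : (v:ℝ) ≠ 0 := by exact_mod_cast hv
  rw [gaussianPDFReal]
  rw [mul_assoc, ← Real.exp_add]
  have : rexp ((v:ℝ) * c ^ 2 / 2) * ((Real.sqrt (2 * π * (v:ℝ)))⁻¹ * rexp (-(x - (v:ℝ)*c)^2 / (2*(v:ℝ))))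
      = (Real.sqrt (2 * π * (v:ℝ)))⁻¹ * rexp (-(x - (v:ℝ)*c)^2 / (2*(v:ℝ)) + (v:ℝ) * c ^ 2 / 2) := by
    rw [Real.exp_add]; ring
  rw [this]
  congr 1
  field_simp
  ring

lemma integral_gauss_shift (v : ℝ≥0) (hv : v ≠ 0) (m : ℝ) :
    ∫ x : ℝ, rexp (-(x - m)^2 / (2*(v:ℝ))) = Real.sqrt (2 * π * v) := by
  have hv' : (0:ℝ) < (v:ℝ) := lt_of_le_of_ne v.2 (by exact_mod_cast hv.symm)
  have h1 : ∀ x : ℝ, rexp (-(x - m)^2 / (2*(v:ℝ))) = rexp (-(2*(v:ℝ))⁻¹ * (x - m)^2) := by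
    intro x; congr 1; field_simp
  simp_rw [h1]
  rw [integral_sub_right_eq_self (fun x => rexp (-(2*(v:ℝ))⁻¹ * x^2)) m]
  rw [integral_gaussian]
  congr 1; field_simp

lemma integrable_exp_mul_pdf (v : ℝ≥0) (hv : v ≠ 0) (c : ℝ) :
    Integrable (fun x => gaussianPDFReal 0 v x * rexp (c * x)) := by
  have hv' : (0:ℝ) < (v:ℝ) := lt_of_le_of_ne v.2 (by exact_mod_cast hv.symm)
  simp_rw [gauss_pdf_mul v hv c]
  have h1 : ∀ x : ℝ, rexp (-(x - (v:ℝ)*c)^2 / (2*(v:ℝ))) = rexp (-(2*(v:ℝ))⁻¹ * (x - (v:ℝ)*c)^2) := by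
    intro x; congr 1; field_simp
  simp_rw [h1]
  exact (((integrable_exp_neg_mul_sq (by positivity : (0:ℝ) < (2*(v:ℝ))⁻¹)).comp_sub_right
    ((v:ℝ)*c)).const_mul _).const_mul _

lemma integrable_exp_mul_gaussianReal (v : ℝ≥0) (hv : v ≠ 0) (c : ℝ) :
    Integrable (fun x => rexp (c * x)) (gaussianReal 0 v) := by
  rw [gaussianReal_of_var_ne_zero 0 hv]
  have hmeas : Measurable fun x => (gaussianPDFReal 0 v x).toNNReal :=
    (measurable_gaussianPDFReal 0 v).real_toNNReal
  have : (gaussianPDF 0 v) = fun x => ((gaussianPDFReal 0 v x).toNNReal : ℝ≥0∞) := by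
    funext x; rfl
  rw [this, integrable_withDensity_iff_integrable_smul hmeas]
  have : ∀ x : ℝ, (gaussianPDFReal 0 v x).toNNReal • rexp (c * x)
      = gaussianPDFReal 0 v x * rexp (c * x) := by
    intro x
    rw [NNReal.smul_def, smul_eq_mul, Real.coe_toNNReal _ (gaussianPDFReal_nonneg 0 v x)]
  simp_rw [this]
  exact integrable_exp_mul_pdf v hv c

lemma integral_exp_mul_gaussianReal (v : ℝ≥0) (hv : v ≠ 0) (c : ℝ) :
    ∫ x, rexp (c * x) ∂(gaussianReal 0 v) = rexp ((v:ℝ) * c ^ 2 / 2) := by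
  have hv' : (0:ℝ) < (v:ℝ) := lt_of_le_of_ne v.2 (by exact_mod_cast hv.symm)
  rw [gaussianReal_of_var_ne_zero 0 hv]
  have hmeas : Measurable fun x => (gaussianPDFReal 0 v x).toNNReal :=
    (measurable_gaussianPDFReal 0 v).real_toNNReal
  have h0 : (gaussianPDF 0 v) = fun x => ((gaussianPDFReal 0 v x).toNNReal : ℝ≥0∞) := by
    funext x; rfl
  rw [h0, integral_withDensity_eq_integral_smul hmeas]
  have h1 : ∀ x : ℝ, (gaussianPDFReal 0 v x).toNNReal • rexp (c * x)
      = rexp ((v:ℝ) * c ^ 2 / 2) * ((Real.sqrt (2 * π * v))⁻¹ * rexp (-(x - v*c)^2 / (2*(v:ℝ)))) := by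
    intro x
    rw [NNReal.smul_def, smul_eq_mul, Real.coe_toNNReal _ (gaussianPDFReal_nonneg 0 v x)]
    exact gauss_pdf_mul v hv c x
  simp_rw [h1]
  rw [integral_const_mul, integral_const_mul, integral_gauss_shift v hv]
  rw [inv_mul_cancel₀ (by positivity), mul_one]

/-- If `β̂` is measurable w.r.t. `ε`, satisfies `|β̂|₁ ≤ L` and
`‖Y − Xβ̂‖² ≤ ‖Y − Xβ*‖²` where `Y = Xβ* + ε`, and `|β*|₁ ≤ L`, then
`E ‖Xβ* − Xβ̂‖² ≤ 4Lσ (2 n M^{1/2} log(2p))^{1/2}`.  (In particular this holds for any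
measurable minimizer of `‖Y − Xβ‖` subject to `|β|₁ ≤ L`.) -/
theorem stmt19 {Ω : Type*} [MeasureSpace Ω] [IsProbabilityMeasure (ℙ : Measure Ω)]
    (n p : ℕ) (hn : 0 < n) (hp : 0 < p)
    (x : Fin n → Fin p → ℝ) (βs : Fin p → ℝ)
    (M : ℝ) (hM : M = ⨆ j : Fin p, (1 / n : ℝ) * ∑ i, x i j ^ 4)
    (L : ℝ) (hL : 0 < L) (hβs : ∑ j, |βs j| ≤ L)
    (σ : ℝ) (hσ : 0 < σ)
    (ε : Fin n → Ω → ℝ)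
    (hmeas : ∀ i, Measurable (ε i))
    (hindep : iIndepFun ε ℙ)
    (hgauss : ∀ i, Measure.map (ε i) ℙ = gaussianReal 0 ⟨σ ^ 2, sq_nonneg σ⟩)
    (y : Fin n → Ω → ℝ) (hy : ∀ i ω, y i ω = ∑ j, x i j * βs j + ε i ω)
    (βhat : Ω → Fin p → ℝ)
    (hβmeas : @Measurable Ω (Fin p → ℝ)
      (MeasurableSpace.comap (fun ω (i : Fin n) => ε i ω) inferInstance) _ βhat)
    (hβL : ∀ ω, ∑ j, |βhat ω j| ≤ L)
    (hβmin : ∀ ω, ∑ i, (y i ω - ∑ j, x i j * βhat ω j) ^ 2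
      ≤ ∑ i, (y i ω - ∑ j, x i j * βs j) ^ 2) :
    ∫ ω, ∑ i, ((∑ j, x i j * βs j) - ∑ j, x i j * βhat ω j) ^ 2 ∂ℙ
      ≤ 4 * L * σ * Real.sqrt (2 * n * Real.sqrt M * Real.log (2 * p)) := by
  classical
  -- trivial case: all x are zero
  have hMle : ∀ j : Fin p, (1/(n:ℝ)) * ∑ i, x i j ^ 4 ≤ M := by
    intro j; rw [hM]
    exact le_ciSup (f := fun j : Fin p => (1/(n:ℝ)) * ∑ i, x i j ^ 4)
      (Set.Finite.bddAbove (Set.finite_range _)) j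
  have hn' : (0:ℝ) < n := by exact_mod_cast hn
  have hM0le : 0 ≤ M := le_trans (by positivity) (hMle ⟨0, hp⟩)
  by_cases hM0 : M = 0
  · have hx0 : ∀ i j, x i j = 0 := by
      intro i j
      have h1 := hMle j
      rw [hM0] at h1
      have h2 : ∑ i, x i j ^ 4 ≤ 0 := by
        have h5 := mul_le_mul_of_nonneg_left h1 hn'.le
        rw [mul_zero] at h5
        calc ∑ i, x i j ^ 4 = (n:ℝ) * (1/(n:ℝ) * ∑ i, x i j ^ 4) := by field_simp
          _ ≤ 0 := h5
      have h3 : ∀ i ∈ Finset.univ, (0:ℝ) ≤ x i j ^ 4 := fun i _ => by positivity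
      have h4 := (Finset.sum_eq_zero_iff_of_nonneg h3).mp (le_antisymm h2 (Finset.sum_nonneg h3))
      have := h4 i (Finset.mem_univ i)
      exact pow_eq_zero_iff (by norm_num) |>.mp this
    simp [hx0, hM0]
  -- main case
  have hMpos : 0 < M := lt_of_le_of_ne hM0le (Ne.symm hM0)
  set v : ℝ≥0 := ⟨σ^2, sq_nonneg σ⟩ with hvdef
  have hv : v ≠ 0 := by
    refine NNReal.coe_ne_zero.mp ?_
    show (σ^2 : ℝ) ≠ 0
    positivity
  have hexp : ∀ (u : ℝ) (i : Fin n), Integrable (fun ω => rexp (u * ε i ω)) ℙ ∧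
      (∫ ω, rexp (u * ε i ω) ∂ℙ) = rexp (σ^2 * u^2 / 2) := by
    intro u i
    have hmg := integral_exp_mul_gaussianReal v hv u
    have hig := integrable_exp_mul_gaussianReal v hv u
    rw [← hgauss i] at hmg hig
    have hsm : AEStronglyMeasurable (fun z => rexp (u * z)) (Measure.map (ε i) ℙ) :=
      (Real.measurable_exp.comp (measurable_id.const_mul u)).aestronglyMeasurable
    constructor
    · exact (integrable_map_measure hsm (hmeas i).aemeasurable).mp hig
    · rw [← integral_map (hmeas i).aemeasurable hsm]
      exact hmg
  -- column norm bound
  have colbound : ∀ j, (∑ i, x i j ^ 2) ≤ (n:ℝ) * Real.sqrt M := by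
    intro j
    have h4 : (∑ i, x i j ^ 4) ≤ (n:ℝ) * M := by
      have h5 := mul_le_mul_of_nonneg_left (hMle j) hn'.le
      calc ∑ i, x i j ^ 4 = (n:ℝ) * (1/(n:ℝ) * ∑ i, x i j ^ 4) := by field_simp
        _ ≤ (n:ℝ) * M := h5
    have h2 : (∑ i, x i j ^ 2)^2 ≤ (n:ℝ) * ∑ i, (x i j ^ 2)^2 := by
      have := sq_sum_le_card_mul_sum_sq (s := (Finset.univ : Finset (Fin n)))
        (f := fun i => x i j ^ 2)
      simpa using this
    have h2' : (∑ i, x i j ^ 2)^2 ≤ (n:ℝ) * ∑ i, x i j ^ 4 := by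
      have : ∀ i : Fin n, (x i j ^ 2)^2 = x i j ^ 4 := fun i => by ring
      simpa [this] using h2
    have hsq : (∑ i, x i j ^ 2)^2 ≤ ((n:ℝ) * Real.sqrt M)^2 := by
      have hnM : ((n:ℝ) * Real.sqrt M)^2 = (n:ℝ)^2 * M := by
        rw [mul_pow, Real.sq_sqrt hM0le]
      rw [hnM]
      nlinarith
    have h5 := Real.sqrt_le_sqrt hsq
    rwa [Real.sqrt_sq (by positivity), Real.sqrt_sq (by positivity)] at h5
  -- setup constants
  set G : ℝ := Real.log (2*p) with hGdef
  have hG : 0 < G := by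
    apply Real.log_pos
    have : (1:ℝ) ≤ p := by exact_mod_cast hp
    linarith
  set s : ℝ := σ * Real.sqrt ((n:ℝ) * Real.sqrt M) with hsdef
  have hs : 0 < s := by
    apply mul_pos hσ
    apply Real.sqrt_pos.mpr
    positivity
  set s2 : ℝ := σ^2 * ((n:ℝ) * Real.sqrt M) with hs2def
  have hss : s^2 = s2 := by
    rw [hsdef, hs2def, mul_pow, Real.sq_sqrt (by positivity)]
  set t : ℝ := Real.sqrt (2*G) / s with htdef
  have ht : 0 < t := div_pos (Real.sqrt_pos.mpr (by linarith)) hs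
  have ht2 : t^2 * s2 = 2*G := by
    rw [htdef, div_pow, Real.sq_sqrt (by linarith : (0:ℝ) ≤ 2*G), hss]
    field_simp
    exact div_self (by rw [← hss]; positivity)
  set V : Fin p → Ω → ℝ := fun j ω => ∑ i, x i j * ε i ω with hVdef
  have hVmeas : ∀ j, Measurable (V j) :=
    fun j => Finset.measurable_sum _ fun i _ => (hmeas i).const_mul _
  -- mgf bound for columns
  have hVmgf : ∀ (u : ℝ) (j : Fin p), Integrable (fun ω => rexp (u * V j ω)) ℙ ∧
      (∫ ω, rexp (u * V j ω) ∂ℙ) ≤ rexp (u^2 * s2 / 2) := by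
    intro u j
    set X : Fin n → Ω → ℝ := fun i ω => x i j * ε i ω with hXdef
    have hXmeas : ∀ i, Measurable (X i) := fun i => (hmeas i).const_mul _
    have hindX : iIndepFun X ℙ :=
      hindep.comp (fun i r => x i j * r) (fun i => measurable_id.const_mul _)
    have hXint : ∀ i : Fin n, Integrable (fun ω => rexp (u * X i ω)) ℙ := by
      intro i
      have h := (hexp (u * x i j) i).1
      simp_rw [mul_assoc] at h
      exact h
    have hVX : V j = ∑ i, X i := by
      funext ω; simp [hVdef, hXdef, Finset.sum_apply]
    constructor
    · have h := hindX.integrable_exp_mul_sum hXmeas (s := Finset.univ) (fun i _ => hXint i)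
      rw [← hVX] at h
      exact h
    · have hmgf : mgf (V j) ℙ u = ∏ i, mgf (X i) ℙ u := by
        rw [hVX]; exact hindX.mgf_sum hXmeas _
      have hXmgf : ∀ i : Fin n, mgf (X i) ℙ u = rexp (σ^2 * (u * x i j)^2 / 2) := by
        intro i
        have h := (hexp (u * x i j) i).2
        simp_rw [mul_assoc] at h
        exact h
      have hVeq : (∫ ω, rexp (u * V j ω) ∂ℙ) = mgf (V j) ℙ u := rfl
      rw [hVeq, hmgf]
      calc ∏ i, mgf (X i) ℙ u = rexp (∑ i, σ^2 * (u * x i j)^2 / 2) := by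
            rw [Real.exp_sum]; exact Finset.prod_congr rfl fun i _ => hXmgf i
        _ ≤ rexp (u^2 * s2 / 2) := by
            apply Real.exp_le_exp.2
            have heq : ∑ i, σ^2 * (u * x i j)^2 / 2 = (σ^2 * u^2/2) * ∑ i, (x i j)^2 := by
              rw [Finset.mul_sum]; exact Finset.sum_congr rfl fun i _ => by ring
            rw [heq]
            calc (σ^2*u^2/2) * ∑ i, (x i j)^2 ≤ (σ^2*u^2/2) * ((n:ℝ) * Real.sqrt M) := by
                  apply mul_le_mul_of_nonneg_left _ (by positivity)
                  simpa [sq] using colbound j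
              _ = u^2 * s2 / 2 := by rw [hs2def]; ring
  -- measurability of βhat
  have hε : Measurable fun ω (i : Fin n) => ε i ω := measurable_pi_lambda _ hmeas
  have hβm : Measurable βhat := hβmeas.mono hε.comap_le le_rfl
  have hGfmeas : ∀ i : Fin n, Measurable fun ω => ∑ j, x i j * βhat ω j :=
    fun i => Finset.measurable_sum _ fun j _ => ((measurable_pi_apply j).comp hβm).const_mul _
  have hDmeas : Measurable fun ω => ∑ i, ((∑ j, x i j * βs j) - ∑ j, x i j * βhat ω j)^2 :=
    Finset.measurable_sum _ fun i _ => (measurable_const.sub (hGfmeas i)).pow_const 2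
  set W : Ω → ℝ := fun ω => ∑ j, (rexp (t * V j ω) + rexp ((-t) * V j ω)) with hWdef
  have hWmeas : Measurable W :=
    Finset.measurable_sum _ fun j _ =>
      (((hVmeas j).const_mul t).exp).add (((hVmeas j).const_mul (-t)).exp)
  have hWge : ∀ ω, 2*(p:ℝ) ≤ W ω := by
    intro ω
    have h1 : ∀ j : Fin p, (2:ℝ) ≤ rexp (t * V j ω) + rexp ((-t) * V j ω) := by
      intro j
      nlinarith [Real.add_one_le_exp (t * V j ω), Real.add_one_le_exp ((-t) * V j ω),
        Real.exp_nonneg (t * V j ω), Real.exp_nonneg ((-t) * V j ω)]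
    calc 2*(p:ℝ) = ∑ _j : Fin p, (2:ℝ) := by
          simp [Finset.sum_const, Finset.card_univ, mul_comm]
      _ ≤ W ω := Finset.sum_le_sum fun j _ => h1 j
  have hp1 : (1:ℝ) ≤ p := by exact_mod_cast hp
  have hWpos : ∀ ω, 0 < W ω := fun ω => lt_of_lt_of_le (by linarith) (hWge ω)
  have hW1 : ∀ ω, 1 ≤ W ω := fun ω => le_trans (by linarith) (hWge ω)
  -- step 1: basic inequality
  have step1 : ∀ ω, (∑ i, ((∑ j, x i j * βs j) - ∑ j, x i j * βhat ω j)^2)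
      ≤ 2 * ∑ j, (βhat ω j - βs j) * V j ω := by
    intro ω
    have hmin := hβmin ω
    simp only [hy] at hmin
    have e1 : ∀ i : Fin n, ((∑ j, x i j * βs j) + ε i ω - ∑ j, x i j * βhat ω j)^2
        = ((∑ j, x i j * βs j) - ∑ j, x i j * βhat ω j)^2
          + 2*(((∑ j, x i j * βs j) - ∑ j, x i j * βhat ω j)*ε i ω) + (ε i ω)^2 :=
      fun i => by ring
    have e2 : ∀ i : Fin n, ((∑ j, x i j * βs j) + ε i ω - ∑ j, x i j * βs j)^2 = (ε i ω)^2 :=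
      fun i => by ring
    simp only [e1, e2] at hmin
    rw [Finset.sum_add_distrib, Finset.sum_add_distrib, ← Finset.mul_sum] at hmin
    have key : (∑ j, (βhat ω j - βs j) * V j ω)
        = - ∑ i, (((∑ j, x i j * βs j) - ∑ j, x i j * βhat ω j) * ε i ω) := by
      have h1 : ∀ i : Fin n, -(((∑ j, x i j * βs j) - ∑ j, x i j * βhat ω j) * ε i ω)
          = ∑ j, (βhat ω j - βs j) * (x i j * ε i ω) := by
        intro i
        have h2 : ∑ j, (βhat ω j - βs j) * (x i j * ε i ω)
            = ((∑ j, x i j * βhat ω j) - (∑ j, x i j * βs j)) * ε i ω := by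
          rw [← Finset.sum_sub_distrib, Finset.sum_mul]
          exact Finset.sum_congr rfl fun j _ => by ring
        rw [h2]; ring
      calc ∑ j, (βhat ω j - βs j) * V j ω
          = ∑ j, ∑ i, (βhat ω j - βs j) * (x i j * ε i ω) := by
            refine Finset.sum_congr rfl fun j _ => ?_
            simp only [hVdef]
            rw [Finset.mul_sum]
        _ = ∑ i, ∑ j, (βhat ω j - βs j) * (x i j * ε i ω) := Finset.sum_comm
        _ = ∑ i, -(((∑ j, x i j * βs j) - ∑ j, x i j * βhat ω j) * ε i ω) :=
            Finset.sum_congr rfl fun i _ => (h1 i).symm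
        _ = - ∑ i, (((∑ j, x i j * βs j) - ∑ j, x i j * βhat ω j) * ε i ω) := by
            rw [Finset.sum_neg_distrib]
    linarith [hmin, key]
  -- step 2: pointwise bound via log W
  have step2 : ∀ ω, (∑ i, ((∑ j, x i j * βs j) - ∑ j, x i j * βhat ω j)^2)
      ≤ (4*L/t) * Real.log (W ω) := by
    intro ω
    have hVb : ∀ j, |V j ω| ≤ Real.log (W ω) / t := by
      intro j
      have h1 : rexp (t * |V j ω|) ≤ W ω := by
        have hterm : rexp (t * |V j ω|) ≤ rexp (t * V j ω) + rexp ((-t) * V j ω) := by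
          rcases le_total 0 (V j ω) with h | h
          · rw [abs_of_nonneg h]
            exact le_add_of_nonneg_right (Real.exp_nonneg _)
          · rw [abs_of_nonpos h]
            have heq : t * -V j ω = (-t) * V j ω := by ring
            rw [heq]
            exact le_add_of_nonneg_left (Real.exp_nonneg _)
        refine le_trans hterm ?_
        have h3 := Finset.single_le_sum
          (f := fun j => rexp (t * V j ω) + rexp ((-t) * V j ω))
          (fun j _ => by positivity) (Finset.mem_univ j)
        simpa [hWdef] using h3
      have h2 : t * |V j ω| ≤ Real.log (W ω) := (Real.le_log_iff_exp_le (hWpos ω)).mpr h1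
      rw [le_div_iff₀ ht]
      linarith [h2]
    have hlog0 : 0 ≤ Real.log (W ω) := Real.log_nonneg (hW1 ω)
    have hdiv0 : 0 ≤ Real.log (W ω) / t := div_nonneg hlog0 ht.le
    have hsum : ∑ j, (βhat ω j - βs j) * V j ω ≤ (2*L) * (Real.log (W ω) / t) := by
      calc ∑ j, (βhat ω j - βs j) * V j ω
          ≤ ∑ j, |βhat ω j - βs j| * (Real.log (W ω) / t) := by
            apply Finset.sum_le_sum
            intro j _
            calc (βhat ω j - βs j) * V j ω ≤ |(βhat ω j - βs j) * V j ω| := le_abs_self _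
              _ = |βhat ω j - βs j| * |V j ω| := abs_mul _ _
              _ ≤ |βhat ω j - βs j| * (Real.log (W ω) / t) :=
                  mul_le_mul_of_nonneg_left (hVb j) (abs_nonneg _)
        _ = (∑ j, |βhat ω j - βs j|) * (Real.log (W ω) / t) := by rw [Finset.sum_mul]
        _ ≤ (2*L) * (Real.log (W ω) / t) := by
            apply mul_le_mul_of_nonneg_right _ hdiv0
            calc ∑ j, |βhat ω j - βs j| ≤ ∑ j, (|βhat ω j| + |βs j|) :=
                  Finset.sum_le_sum fun j _ => abs_sub _ _
              _ = (∑ j, |βhat ω j|) + ∑ j, |βs j| := Finset.sum_add_distrib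
              _ ≤ 2*L := by linarith [hβL ω, hβs]
    calc ∑ i, ((∑ j, x i j * βs j) - ∑ j, x i j * βhat ω j)^2
        ≤ 2 * ∑ j, (βhat ω j - βs j) * V j ω := step1 ω
      _ ≤ 2 * ((2*L) * (Real.log (W ω) / t)) := by linarith [hsum]
      _ = (4*L/t) * Real.log (W ω) := by field_simp; ring
  -- integrability
  have hWint : Integrable W ℙ :=
    integrable_finset_sum _ fun j _ => ((hVmgf t j).1.add ((hVmgf (-t) j).1))
  have hlogint : Integrable (fun ω => Real.log (W ω)) ℙ := by
    refine hWint.mono' (hWmeas.log.aestronglyMeasurable) (Filter.Eventually.of_forall fun ω => ?_)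
    rw [Real.norm_eq_abs, abs_of_nonneg (Real.log_nonneg (hW1 ω))]
    have := Real.log_le_sub_one_of_pos (hWpos ω)
    linarith
  have hDnonneg : ∀ ω, 0 ≤ ∑ i, ((∑ j, x i j * βs j) - ∑ j, x i j * βhat ω j)^2 :=
    fun ω => Finset.sum_nonneg fun i _ => sq_nonneg _
  have hDint : Integrable (fun ω => ∑ i, ((∑ j, x i j * βs j) - ∑ j, x i j * βhat ω j)^2) ℙ := by
    refine (hlogint.const_mul (4*L/t)).mono' hDmeas.aestronglyMeasurable
      (Filter.Eventually.of_forall fun ω => ?_)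
    rw [Real.norm_eq_abs, abs_of_nonneg (hDnonneg ω)]
    exact step2 ω
  -- Jensen
  have hintWpos : 0 < ∫ ω, W ω ∂ℙ := by
    have h1 : (2*(p:ℝ)) ≤ ∫ ω, W ω ∂ℙ := by
      have := integral_mono (integrable_const (2*(p:ℝ))) hWint hWge
      simpa using this
    linarith
  have hjensen : (∫ ω, Real.log (W ω) ∂ℙ) ≤ Real.log (∫ ω, W ω ∂ℙ) := by
    rw [Real.le_log_iff_exp_le hintWpos]
    have h := convexOn_exp.map_integral_le (Real.continuous_exp.continuousOn)
      isClosed_univ (Filter.Eventually.of_forall fun ω => Set.mem_univ _) hlogint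
      (by
        refine hWint.congr (Filter.Eventually.of_forall fun ω => ?_)
        show W ω = (rexp ∘ fun ω => Real.log (W ω)) ω
        simp [Real.exp_log (hWpos ω)])
    refine le_trans h (le_of_eq ?_)
    exact integral_congr_ae (Filter.Eventually.of_forall fun ω => Real.exp_log (hWpos ω))
  -- bound on ∫ W
  have hintW : (∫ ω, W ω ∂ℙ) ≤ (p:ℝ) * (2 * rexp (t^2 * s2 / 2)) := by
    have hWeq : (∫ ω, W ω ∂ℙ) = ∑ j : Fin p, ∫ ω, (rexp (t * V j ω) + rexp ((-t) * V j ω)) ∂ℙ := by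
      simp only [hWdef]
      exact integral_finset_sum _ fun j _ => ((hVmgf t j).1.add ((hVmgf (-t) j).1))
    rw [hWeq]
    have hterm : ∀ j : Fin p, (∫ ω, (rexp (t * V j ω) + rexp ((-t) * V j ω)) ∂ℙ)
        ≤ 2 * rexp (t^2 * s2 / 2) := by
      intro j
      rw [integral_add (hVmgf t j).1 (hVmgf (-t) j).1]
      have h1 := (hVmgf t j).2
      have h2 := (hVmgf (-t) j).2
      rw [neg_sq] at h2
      linarith
    calc (∑ j : Fin p, ∫ ω, (rexp (t * V j ω) + rexp ((-t) * V j ω)) ∂ℙ)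
        ≤ ∑ _j : Fin p, 2 * rexp (t^2 * s2 / 2) := Finset.sum_le_sum fun j _ => hterm j
      _ = (p:ℝ) * (2 * rexp (t^2 * s2 / 2)) := by
          simp [Finset.sum_const, Finset.card_univ]
  have hlogW : Real.log (∫ ω, W ω ∂ℙ) ≤ G + G := by
    calc Real.log (∫ ω, W ω ∂ℙ) ≤ Real.log ((p:ℝ) * (2 * rexp (t^2 * s2 / 2))) :=
          Real.log_le_log hintWpos hintW
      _ = Real.log ((2*(p:ℝ)) * rexp (t^2 * s2 / 2)) := by ring_nf
      _ = Real.log (2*(p:ℝ)) + (t^2 * s2 / 2) := by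
          rw [Real.log_mul (by positivity) (Real.exp_ne_zero _), Real.log_exp]
      _ = G + G := by rw [← hGdef, ht2]; ring
  -- combine
  calc ∫ ω, ∑ i, ((∑ j, x i j * βs j) - ∑ j, x i j * βhat ω j)^2 ∂ℙ
      ≤ ∫ ω, (4*L/t) * Real.log (W ω) ∂ℙ :=
        integral_mono hDint (hlogint.const_mul _) step2
    _ = (4*L/t) * ∫ ω, Real.log (W ω) ∂ℙ := integral_const_mul _ _
    _ ≤ (4*L/t) * (G + G) := by
        have h1 : (0:ℝ) ≤ 4*L/t := by positivity
        exact mul_le_mul_of_nonneg_left (le_trans hjensen hlogW) h1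
    _ = 4 * L * σ * Real.sqrt (2 * n * Real.sqrt M * Real.log (2 * p)) := by
        have h2G : (0:ℝ) < 2*G := by linarith
        have e1 : (4*L/t) * (G + G) = 4*L*s*((2*G)/Real.sqrt (2*G)) := by
          rw [htdef]
          have hsq : Real.sqrt (2*G) ≠ 0 := by positivity
          field_simp
          ring
        rw [e1, Real.div_sqrt]
        have e2 : 2 * (n:ℝ) * Real.sqrt M * Real.log (2*(p:ℝ))
            = ((n:ℝ) * Real.sqrt M) * (2*G) := by rw [hGdef]; ring
        rw [e2, Real.sqrt_mul (by positivity : (0:ℝ) ≤ (n:ℝ)*Real.sqrt M), hsdef]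
        ring
end
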